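/- arXiv:2108.13127 — 8 statements merged into one kernel-verified Lean document; each statement's English description precedes it below -/
import Mathlib

section
/- Let 0 < a < b and 2 < μ < 3, and let G be the Green's function defined by G(t,τ) = (1/(Γ(μ)·(ln(b/a))^(μ-1))) · [ (ln(t/a))^(μ-1)·(ln(b/τ))^(μ-1) − (ln(t/τ))^(μ-1)·(ln(b/a))^(μ-1) ] for a ≤ τ ≤ t ≤ b, and G(t,τ) = (1/(Γ(μ)·(ln(b/a))^(μ-1))) · (ln(t/a))^(μ-1)·(ln(b/τ))^(μ-1) for a ≤ t ≤ τ ≤ b. Then for all t, τ ∈ [a, b], G(t,τ) ≤ u(t)/(Γ(μ)·ln(b/a)), where u(t) = (ln(t/a))^(μ-1)·(ln(b/t)). -/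
noncomputable def G (a b μ : ℝ) (t τ : ℝ) : ℝ :=
  if τ ≤ t then
    (1 / (Real.Gamma μ * Real.log (b / a) ^ (μ - 1))) *
      (Real.log (t / a) ^ (μ - 1) * Real.log (b / τ) ^ (μ - 1) -
        Real.log (t / τ) ^ (μ - 1) * Real.log (b / a) ^ (μ - 1))
  else
    (1 / (Real.Gamma μ * Real.log (b / a) ^ (μ - 1))) *
      (Real.log (t / a) ^ (μ - 1) * Real.log (b / τ) ^ (μ - 1))

lemma rpow_le_aux3 {c L β : ℝ} (hc : 0 ≤ c) (hcL : c ≤ L) (hβ : 1 ≤ β) :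
    c ^ β ≤ L ^ (β - 1) * c := by
  rcases eq_or_lt_of_le hc with h | h
  · rw [← h, Real.zero_rpow (by linarith), mul_zero]
  · have h1 : c ^ β = c ^ (β - 1) * c := by
      rw [← Real.rpow_add_one (ne_of_gt h)]; ring_nf
    rw [h1]
    have h2 : c ^ (β - 1) ≤ L ^ (β - 1) := Real.rpow_le_rpow hc hcL (by linarith)
    exact mul_le_mul_of_nonneg_right h2 hc

lemma key_ineq3 {β L x y : ℝ} (hβ : 1 ≤ β) (hL : 0 < L) (hx0 : 0 ≤ x) (hxL : x ≤ L)
    (hy0 : 0 ≤ y) (hyx : y ≤ x) :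
    x ^ β * (L - y) ^ β - (x - y) ^ β * L ^ β ≤ x ^ β * (L - x) * L ^ (β - 1) := by
  have hLy : 0 ≤ L - y := by linarith
  have hxy : 0 ≤ x - y := by linarith
  have ha0 : (0:ℝ) ≤ 1 - x / L := by
    have : x / L ≤ 1 := (div_le_one hL).2 hxL
    linarith
  have hb0 : (0:ℝ) ≤ x / L := div_nonneg hx0 hL.le
  have h1 := (convexOn_rpow hβ).2 (Set.mem_Ici.2 (by positivity : (0:ℝ) ≤ x * L))
      (Set.mem_Ici.2 (by positivity : (0:ℝ) ≤ (x - y) * L)) ha0 hb0 (by ring)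
  simp only [smul_eq_mul] at h1
  have harg : (1 - x / L) * (x * L) + x / L * ((x - y) * L) = x * (L - y) := by
    field_simp; ring
  rw [harg] at h1
  -- multiply by L
  have h2 := mul_le_mul_of_nonneg_left h1 hL.le
  have hrhs : L * ((1 - x / L) * (x * L) ^ β + x / L * ((x - y) * L) ^ β)
      = (L - x) * (x * L) ^ β + x * ((x - y) * L) ^ β := by
    field_simp
    try ring
  rw [hrhs] at h2
  rw [Real.mul_rpow hx0 hL.le, Real.mul_rpow hxy hL.le,
    Real.mul_rpow hx0 hLy] at h2
  -- h2 : L * (x^β * (L-y)^β) ≤ (L-x) * (x^β * L^β) + x * ((x-y)^β * L^β)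
  have hLβ : L ^ β = L ^ (β - 1) * L := by
    rw [← Real.rpow_add_one (ne_of_gt hL)]; ring_nf
  rw [hLβ] at h2 ⊢
  have hQ : 0 ≤ (x - y) ^ β := Real.rpow_nonneg hxy β
  have hM : 0 ≤ L ^ (β - 1) := Real.rpow_nonneg hL.le _
  nlinarith [mul_nonneg hQ hM, mul_nonneg (mul_nonneg hQ hM) (by linarith : (0:ℝ) ≤ L - x)]

lemma case1_aux3 {Γ β L x y : ℝ} (hΓ : 0 < Γ) (hβ : 1 ≤ β) (hL : 0 < L) (hx0 : 0 ≤ x)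
    (hxL : x ≤ L) (hy0 : 0 ≤ y) (hyx : y ≤ x) :
    1 / (Γ * L ^ β) * (x ^ β * (L - y) ^ β - (x - y) ^ β * L ^ β)
      ≤ x ^ β * (L - x) / (Γ * L) := by
  have hpos : 0 < Γ * L ^ β := mul_pos hΓ (Real.rpow_pos_of_pos hL β)
  have hLβ : L ^ β = L ^ (β - 1) * L := by
    rw [← Real.rpow_add_one (ne_of_gt hL)]; ring_nf
  calc 1 / (Γ * L ^ β) * (x ^ β * (L - y) ^ β - (x - y) ^ β * L ^ β)
      ≤ 1 / (Γ * L ^ β) * (x ^ β * (L - x) * L ^ (β - 1)) := by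
        exact mul_le_mul_of_nonneg_left (key_ineq3 hβ hL hx0 hxL hy0 hyx)
          (le_of_lt (by positivity))
    _ = x ^ β * (L - x) / (Γ * L) := by
        rw [hLβ]
        have hM : (0:ℝ) < L ^ (β - 1) := Real.rpow_pos_of_pos hL _
        field_simp

lemma case2_aux3 {Γ β L x y : ℝ} (hΓ : 0 < Γ) (hβ : 1 ≤ β) (hL : 0 < L) (hx0 : 0 ≤ x)
    (hxL : x ≤ L) (hyL : y ≤ L) (hxy : x ≤ y) :
    1 / (Γ * L ^ β) * (x ^ β * (L - y) ^ β) ≤ x ^ β * (L - x) / (Γ * L) := by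
  have hLy : 0 ≤ L - y := by linarith
  have h1 : (L - y) ^ β ≤ L ^ (β - 1) * (L - x) := by
    calc (L - y) ^ β ≤ L ^ (β - 1) * (L - y) := rpow_le_aux3 hLy (by linarith) hβ
      _ ≤ L ^ (β - 1) * (L - x) := by
          exact mul_le_mul_of_nonneg_left (by linarith) (Real.rpow_nonneg hL.le _)
  have hxβ : 0 ≤ x ^ β := Real.rpow_nonneg hx0 β
  have hLβ : L ^ β = L ^ (β - 1) * L := by
    rw [← Real.rpow_add_one (ne_of_gt hL)]; ring_nf
  calc 1 / (Γ * L ^ β) * (x ^ β * (L - y) ^ β)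
      ≤ 1 / (Γ * L ^ β) * (x ^ β * (L ^ (β - 1) * (L - x))) := by
        apply mul_le_mul_of_nonneg_left (mul_le_mul_of_nonneg_left h1 hxβ)
        have := Real.rpow_pos_of_pos hL β
        positivity
    _ = x ^ β * (L - x) / (Γ * L) := by
        rw [hLβ]
        have hM : (0:ℝ) < L ^ (β - 1) := Real.rpow_pos_of_pos hL _
        field_simp

theorem stmt_3 (a b μ : ℝ) (ha : 0 < a) (hab : a < b) (hμ2 : 2 < μ) (hμ3 : μ < 3) :
    ∀ t ∈ Set.Icc a b, ∀ τ ∈ Set.Icc a b,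
      G a b μ t τ ≤
        (Real.log (t / a) ^ (μ - 1) * Real.log (b / t)) / (Real.Gamma μ * Real.log (b / a)) := by
  intro t ht τ hτ
  obtain ⟨hat, htb⟩ := ht
  obtain ⟨haτ, hτb⟩ := hτ
  have ht0 : 0 < t := lt_of_lt_of_le ha hat
  have hτ0 : 0 < τ := lt_of_lt_of_le ha haτ
  have hb0 : 0 < b := ha.trans hab
  have hΓ : 0 < Real.Gamma μ := Real.Gamma_pos_of_pos (by linarith)
  have hβ : 1 ≤ μ - 1 := by linarith
  have e1 : Real.log (t / a) = Real.log t - Real.log a := Real.log_div ht0.ne' ha.ne'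
  have e2 : Real.log (b / τ) = Real.log b - Real.log τ := Real.log_div hb0.ne' hτ0.ne'
  have e3 : Real.log (t / τ) = Real.log t - Real.log τ := Real.log_div ht0.ne' hτ0.ne'
  have e4 : Real.log (b / a) = Real.log b - Real.log a := Real.log_div hb0.ne' ha.ne'
  have e5 : Real.log (b / t) = Real.log b - Real.log t := Real.log_div hb0.ne' ht0.ne'
  have hlat : Real.log a ≤ Real.log t := Real.log_le_log ha hat
  have hltb : Real.log t ≤ Real.log b := Real.log_le_log ht0 htb
  have hlaτ : Real.log a ≤ Real.log τ := Real.log_le_log ha haτ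
  have hlτb : Real.log τ ≤ Real.log b := Real.log_le_log hτ0 hτb
  have hL : 0 < Real.log b - Real.log a := by
    have := Real.log_lt_log ha hab; linarith
  unfold G
  by_cases hc : τ ≤ t
  · rw [if_pos hc, e1, e2, e3, e4, e5]
    have hlτt : Real.log τ ≤ Real.log t := Real.log_le_log hτ0 hc
    have r1 : Real.log b - Real.log τ
        = (Real.log b - Real.log a) - (Real.log τ - Real.log a) := by ring
    have r2 : Real.log t - Real.log τ
        = (Real.log t - Real.log a) - (Real.log τ - Real.log a) := by ring
    have r3 : Real.log b - Real.log t
        = (Real.log b - Real.log a) - (Real.log t - Real.log a) := by ring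
    rw [r1, r2, r3]
    exact case1_aux3 hΓ hβ hL (by linarith) (by linarith) (by linarith) (by linarith)
  · rw [if_neg hc, e1, e2, e4, e5]
    push_neg at hc
    have hlτt : Real.log t ≤ Real.log τ := Real.log_le_log ht0 hc.le
    have r1 : Real.log b - Real.log τ
        = (Real.log b - Real.log a) - (Real.log τ - Real.log a) := by ring
    have r3 : Real.log b - Real.log t
        = (Real.log b - Real.log a) - (Real.log t - Real.log a) := by ring
    rw [r1, r3]
    exact case2_aux3 hΓ hβ hL (by linarith) (by linarith) (by linarith) (by linarith)
end

section
/- Let 0 < a < b and 2 < μ < 3, and let G be the Green's function defined by G(t,τ) = (1/(Γ(μ)·(ln(b/a))^(μ-1))) · [ (ln(t/a))^(μ-1)·(ln(b/τ))^(μ-1) − (ln(t/τ))^(μ-1)·(ln(b/a))^(μ-1) ] for a ≤ τ ≤ t ≤ b, and G(t,τ) = (1/(Γ(μ)·(ln(b/a))^(μ-1))) · (ln(t/a))^(μ-1)·(ln(b/τ))^(μ-1) for a ≤ t ≤ τ ≤ b. Then for all t, τ ∈ [a, b], G(t,τ) ≤ v(τ)/(Γ(μ)·ln(b/a)), where v(τ)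 = (ln(τ/a))·(ln(b/τ))^(μ-1). -/
open Real

lemma my_mvt {X Y q : ℝ} (hY : 0 ≤ Y) (hXY : Y ≤ X) (hq : 1 ≤ q) :
    X ^ q - Y ^ q ≤ q * X ^ (q - 1) * (X - Y) := by
  rcases eq_or_lt_of_le (hY.trans hXY) with hX | hX
  · have hX0 : X = 0 := hX.symm
    have hY0 : Y = 0 := le_antisymm (hX0 ▸ hXY) hY
    have hq0 : q ≠ 0 := by linarith
    simp [hX0, hY0, Real.zero_rpow hq0]
  · have hb := one_add_mul_self_le_rpow_one_add (s := Y / X - 1) (p := q)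
      (by have : 0 ≤ Y / X := div_nonneg hY hX.le; linarith) hq
    rw [add_sub_cancel] at hb
    rw [Real.div_rpow hY hX.le] at hb
    have hXq : 0 < X ^ q := Real.rpow_pos_of_pos hX q
    have h1 : (1 + q * (Y / X - 1)) * X ^ q ≤ Y ^ q := (le_div_iff₀ hXq).1 hb
    rw [Real.rpow_sub_one hX.ne']
    have e : q * (X ^ q / X) * (X - Y) = q * (1 - Y / X) * X ^ q := by
      field_simp
    rw [e]
    nlinarith [h1]

lemma my_bern {x θ : ℝ} (hx : 0 ≤ x) (h0 : 0 ≤ θ) (h1 : θ ≤ 1) :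
    x ^ θ ≤ 1 + θ * (x - 1) := by
  have := rpow_one_add_le_one_add_mul_self (s := x - 1) (by linarith) h0 h1
  rwa [add_sub_cancel] at this

lemma my_aux1 {u q : ℝ} (hu0 : 0 ≤ u) (hu1 : u ≤ 1) (hq1 : 1 ≤ q) (hq2 : q ≤ 2) :
    q * u ^ (q - 1) * (1 - u) ≤ 1 - u ^ q := by
  have hr0 : 0 ≤ q - 1 := by linarith
  have hr1 : q - 1 ≤ 1 := by linarith
  have hq0 : (0:ℝ) < q := by linarith
  -- (a) q * u^(q-1) ≤ 1 + (q-1) * u^q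
  have e1 : (u ^ q) ^ ((q - 1) / q) = u ^ (q - 1) := by
    rw [← Real.rpow_mul hu0]; congr 1; field_simp
  have ha : q * u ^ (q - 1) ≤ 1 + (q - 1) * u ^ q := by
    have hb := my_bern (x := u ^ q) (θ := (q - 1) / q) (Real.rpow_nonneg hu0 q)
      (div_nonneg hr0 hq0.le) (by rw [div_le_one hq0]; linarith)
    rw [e1] at hb
    have := mul_le_mul_of_nonneg_left hb hq0.le
    calc q * u ^ (q - 1) ≤ q * (1 + (q - 1) / q * (u ^ q - 1)) := this
      _ = 1 + (q - 1) * u ^ q := by field_simp; ring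
  -- (b) u^(q-1) ≤ 1 + (q-1)*(u-1)
  have hbb : u ^ (q - 1) ≤ 1 + (q - 1) * (u - 1) := my_bern hu0 hr0 hr1
  -- (c) u^q = u * u^(q-1)
  have hc : u ^ q = u * u ^ (q - 1) := by
    have := Real.rpow_one_add' hu0 (y := q - 1) (by simpa using hq0.ne')
    simpa using this
  have hA1 : u ^ (q - 1) ≤ 1 := Real.rpow_le_one hu0 hu1 hr0
  have hA0 : 0 ≤ u ^ (q - 1) := Real.rpow_nonneg hu0 _
  nlinarith [mul_nonneg hu0 hA0, mul_nonneg (sub_nonneg.2 hu1) (sub_nonneg.2 hA1),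
    mul_nonneg hu0 (mul_nonneg (sub_nonneg.2 hu1) (sub_nonneg.2 hA1)),
    mul_nonneg (mul_nonneg hu0 hA0) (sub_nonneg.2 hu1)]

lemma my_key {q σ u : ℝ} (hq1 : 1 ≤ q) (hq2 : q ≤ 2) (hσ0 : 0 ≤ σ) (hσu : σ ≤ u)
    (hu1 : u ≤ 1) :
    (u * (1 - σ)) ^ q - (u - σ) ^ q ≤ σ * (1 - σ) ^ q := by
  have hu0 : 0 ≤ u := hσ0.trans hσu
  have hσ1 : σ ≤ 1 := hσu.trans hu1
  have h1σ : 0 ≤ 1 - σ := by linarith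
  have hY0 : 0 ≤ u - σ := by linarith
  by_cases h : u ^ q ≤ σ
  · have h2 : (u * (1 - σ)) ^ q = u ^ q * (1 - σ) ^ q := Real.mul_rpow hu0 h1σ
    have h3 : 0 ≤ (u - σ) ^ q := Real.rpow_nonneg hY0 q
    have h4 : u ^ q * (1 - σ) ^ q ≤ σ * (1 - σ) ^ q :=
      mul_le_mul_of_nonneg_right h (Real.rpow_nonneg h1σ q)
    linarith [h2 ▸ h4]
  · push_neg at h
    have hXY : u - σ ≤ u * (1 - σ) := by nlinarith
    have hmvt := my_mvt hY0 hXY hq1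
    have e2 : (u * (1 - σ)) ^ (q - 1) = u ^ (q - 1) * (1 - σ) ^ (q - 1) :=
      Real.mul_rpow hu0 h1σ
    have haux := my_aux1 hu0 hu1 hq1 hq2
    have hσq : q * u ^ (q - 1) * (1 - u) ≤ 1 - σ := le_trans haux (by linarith)
    have e3 : (1 - σ) ^ q = (1 - σ) ^ (q - 1) * (1 - σ) := by
      have h5 := Real.rpow_add' h1σ (y := q - 1) (z := 1) (by intro hcon; linarith [hcon])
      rw [Real.rpow_one] at h5
      rw [show q = q - 1 + 1 by ring, h5]; norm_num
    have hs1 : 0 ≤ (1 - σ) ^ (q - 1) := Real.rpow_nonneg h1σ _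
    have hu1' : 0 ≤ u ^ (q - 1) := Real.rpow_nonneg hu0 _
    -- chain
    have : q * (u * (1 - σ)) ^ (q - 1) * (u * (1 - σ) - (u - σ)) ≤ σ * (1 - σ) ^ q := by
      rw [e2, e3]
      have e4 : q * (u ^ (q - 1) * (1 - σ) ^ (q - 1)) * (u * (1 - σ) - (u - σ))
          = (q * u ^ (q - 1) * (1 - u)) * (σ * (1 - σ) ^ (q - 1)) := by ring
      rw [e4]
      have hσs : 0 ≤ σ * (1 - σ) ^ (q - 1) := mul_nonneg hσ0 hs1
      calc (q * u ^ (q - 1) * (1 - u)) * (σ * (1 - σ) ^ (q - 1))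
          ≤ (1 - σ) * (σ * (1 - σ) ^ (q - 1)) := mul_le_mul_of_nonneg_right hσq hσs
        _ = σ * ((1 - σ) ^ (q - 1) * (1 - σ)) := by ring
    linarith

lemma my_key2 {L x s q : ℝ} (hL : 0 < L) (hs0 : 0 ≤ s) (hsx : s ≤ x) (hxL : x ≤ L)
    (hq1 : 1 ≤ q) (hq2 : q ≤ 2) :
    x ^ q * (L - s) ^ q - (x - s) ^ q * L ^ q ≤ s * (L - s) ^ q * L ^ (q - 1) := by
  have hx0 : 0 ≤ x := hs0.trans hsx
  have hLs : 0 ≤ L - s := by linarith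
  have h := my_key (σ := s / L) (u := x / L) hq1 hq2 (div_nonneg hs0 hL.le)
    (by gcongr) ((div_le_one hL).2 hxL)
  rw [show (1 : ℝ) - s / L = (L - s) / L by field_simp, div_sub_div_same,
    div_mul_div_comm] at h
  rw [Real.div_rpow (mul_nonneg hx0 hLs) (mul_nonneg hL.le hL.le),
    Real.div_rpow (by linarith : (0:ℝ) ≤ x - s) hL.le,
    Real.div_rpow hLs hL.le,
    Real.mul_rpow hx0 hLs, Real.mul_rpow hL.le hL.le] at h
  have hc : 0 < L ^ q := Real.rpow_pos_of_pos hL q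
  rw [Real.rpow_sub_one hL.ne']
  have h' := mul_le_mul_of_nonneg_right h (le_of_lt (mul_pos hc hc))
  have hLne : L ≠ 0 := hL.ne'
  have hcne : L ^ q ≠ 0 := hc.ne'
  have e1 : (x ^ q * (L - s) ^ q / (L ^ q * L ^ q) - (x - s) ^ q / L ^ q) * (L ^ q * L ^ q)
      = x ^ q * (L - s) ^ q - (x - s) ^ q * L ^ q := by field_simp
  have e2 : (s / L * ((L - s) ^ q / L ^ q)) * (L ^ q * L ^ q)
      = s * (L - s) ^ q * (L ^ q / L) := by field_simp
  rw [e1, e2] at h'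
  exact h'


theorem stmt_4 (a b μ : ℝ) (ha : 0 < a) (hab : a < b) (hμ2 : 2 < μ) (hμ3 : μ < 3) :
    ∀ t ∈ Set.Icc a b, ∀ τ ∈ Set.Icc a b,
      G a b μ t τ ≤
        (Real.log (τ / a) * Real.log (b / τ) ^ (μ - 1)) / (Real.Gamma μ * Real.log (b / a)) := by
  rintro t ⟨hat, htb⟩ τ ⟨haτ, hτb⟩
  have ht0 : 0 < t := lt_of_lt_of_le ha hat
  have hτ0 : 0 < τ := lt_of_lt_of_le ha haτ
  have hb0 : 0 < b := ha.trans hab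
  have hq1 : 1 ≤ μ - 1 := by linarith
  have hq2 : μ - 1 ≤ 2 := by linarith
  have hΓ : 0 < Real.Gamma μ := Real.Gamma_pos_of_pos (by linarith)
  have hL : 0 < Real.log (b / a) := Real.log_pos (by rw [lt_div_iff₀ ha]; linarith)
  have hx0 : 0 ≤ Real.log (t / a) := Real.log_nonneg (by rw [le_div_iff₀ ha]; linarith)
  have hs0 : 0 ≤ Real.log (τ / a) := Real.log_nonneg (by rw [le_div_iff₀ ha]; linarith)
  have hy0 : 0 ≤ Real.log (b / τ) := Real.log_nonneg (by rw [le_div_iff₀ hτ0]; linarith)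
  have hxL : Real.log (t / a) ≤ Real.log (b / a) :=
    Real.log_le_log (by positivity) (by gcongr)
  have hy : Real.log (b / τ) = Real.log (b / a) - Real.log (τ / a) := by
    rw [Real.log_div hb0.ne' hτ0.ne', Real.log_div hb0.ne' ha.ne',
      Real.log_div hτ0.ne' ha.ne']; ring
  have hc : 0 < Real.log (b / a) ^ (μ - 1) := Real.rpow_pos_of_pos hL _
  have key3 : ∀ N : ℝ,
      N ≤ Real.log (τ / a) * Real.log (b / τ) ^ (μ - 1) * Real.log (b / a) ^ (μ - 1 - 1) →
      (1 / (Real.Gamma μ * Real.log (b / a) ^ (μ - 1))) * N ≤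
        (Real.log (τ / a) * Real.log (b / τ) ^ (μ - 1)) / (Real.Gamma μ * Real.log (b / a)) := by
    intro N hN
    have h1 : (1 / (Real.Gamma μ * Real.log (b / a) ^ (μ - 1))) * N ≤
        (1 / (Real.Gamma μ * Real.log (b / a) ^ (μ - 1))) *
          (Real.log (τ / a) * Real.log (b / τ) ^ (μ - 1) * Real.log (b / a) ^ (μ - 1 - 1)) :=
      mul_le_mul_of_nonneg_left hN (by positivity)
    have h2 : (1 / (Real.Gamma μ * Real.log (b / a) ^ (μ - 1))) *
          (Real.log (τ / a) * Real.log (b / τ) ^ (μ - 1) * Real.log (b / a) ^ (μ - 1 - 1)) =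
        (Real.log (τ / a) * Real.log (b / τ) ^ (μ - 1)) / (Real.Gamma μ * Real.log (b / a)) := by
      rw [show Real.log (b / a) ^ (μ - 1 - 1) =
          Real.log (b / a) ^ (μ - 1) / Real.log (b / a) from Real.rpow_sub_one hL.ne' (μ - 1)]
      field_simp
    linarith
  unfold G
  split_ifs with hcase
  · -- τ ≤ t
    have hsx : Real.log (τ / a) ≤ Real.log (t / a) :=
      Real.log_le_log (by positivity) (by gcongr)
    have htτ : Real.log (t / τ) = Real.log (t / a) - Real.log (τ / a) := by
      rw [Real.log_div ht0.ne' hτ0.ne', Real.log_div ht0.ne' ha.ne',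
        Real.log_div hτ0.ne' ha.ne']; ring
    have hkey := my_key2 hL hs0 hsx hxL hq1 hq2
    rw [← hy, ← htτ] at hkey
    exact key3 _ (by linarith)
  · -- t < τ
    push_neg at hcase
    have hxs : Real.log (t / a) ≤ Real.log (τ / a) :=
      Real.log_le_log (by positivity) (by gcongr)
    have e : Real.log (t / a) ^ (μ - 1) =
        Real.log (t / a) * Real.log (t / a) ^ (μ - 1 - 1) := by
      have h5 := Real.rpow_one_add' hx0 (y := μ - 1 - 1) (by intro hcon; linarith [hcon])
      rw [show (1:ℝ) + (μ - 1 - 1) = μ - 1 by ring] at h5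
      exact h5
    have mono : Real.log (t / a) ^ (μ - 1 - 1) ≤ Real.log (b / a) ^ (μ - 1 - 1) :=
      Real.rpow_le_rpow hx0 hxL (by linarith)
    have h3 : Real.log (t / a) ^ (μ - 1) ≤ Real.log (τ / a) * Real.log (b / a) ^ (μ - 1 - 1) := by
      rw [e]
      exact mul_le_mul hxs mono (Real.rpow_nonneg hx0 _) hs0
    have h4 : Real.log (t / a) ^ (μ - 1) * Real.log (b / τ) ^ (μ - 1) ≤
        Real.log (τ / a) * Real.log (b / τ) ^ (μ - 1) * Real.log (b / a) ^ (μ - 1 - 1) := by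
      have := mul_le_mul_of_nonneg_right h3 (Real.rpow_nonneg hy0 (μ - 1))
      calc Real.log (t / a) ^ (μ - 1) * Real.log (b / τ) ^ (μ - 1)
          ≤ Real.log (τ / a) * Real.log (b / a) ^ (μ - 1 - 1) * Real.log (b / τ) ^ (μ - 1) :=
            this
        _ = Real.log (τ / a) * Real.log (b / τ) ^ (μ - 1) * Real.log (b / a) ^ (μ - 1 - 1) := by
            ring
    exact key3 _ h4
end

section
/- Let 0 < a < b and 2 < μ < 3, and let G be the Green's function defined by G(t,τ) = (1/(Γ(μ)·(ln(b/a))^(μ-1))) · [ (ln(t/a))^(μ-1)·(ln(b/τ))^(μ-1) − (ln(t/τ))^(μ-1)·(ln(b/a))^(μ-1) ] for a ≤ τ ≤ t ≤ b, and G(t,τ) = (1/(Γ(μ)·(ln(b/a))^(μ-1))) · (ln(t/a))^(μ-1)·(ln(b/τ))^(μ-1) for a ≤ t ≤ τ ≤ b. Then for all t, τ ∈ [a, b], G(t,τ) ≥ u(t)·v(τ)/(Γ(μ)·(ln(b/a))^(μ+1)), where u(t) = (ln(t/a))^(μ-1)·(ln(b/t)) and v(τ) = (ln(τ/a))·(ln(b/τ))^(μ-1).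 -/
lemma key1 (γ L x y : ℝ) (hγ : 1 ≤ γ) (hL : 0 < L) (hx0 : 0 ≤ x) (hxL : x ≤ L)
    (hy0 : 0 ≤ y) (hyL : y ≤ L) (hyx : y ≤ x) :
    x ^ γ * (L - x) * (y * (L - y) ^ γ) / L ^ 2 ≤
      x ^ γ * (L - y) ^ γ - (x - y) ^ γ * L ^ γ := by
  have hγ0 : (0:ℝ) ≤ γ - 1 := by linarith
  have hxy0 : (0:ℝ) ≤ x - y := by linarith
  have hLy0 : (0:ℝ) ≤ L - y := by linarith
  have hLx0 : (0:ℝ) ≤ L - x := by linarith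
  set p := x ^ (γ - 1) with hp
  set q := (L - y) ^ (γ - 1) with hq
  have hp0 : 0 ≤ p := Real.rpow_nonneg hx0 _
  have hq0 : 0 ≤ q := Real.rpow_nonneg hLy0 _
  have hP : x ^ γ = p * x := by
    rw [hp, show γ = (γ - 1) + 1 by ring, Real.rpow_add' hx0 (by linarith), Real.rpow_one]; ring_nf
  have hQ : (L - y) ^ γ = q * (L - y) := by
    rw [hq, show γ = (γ - 1) + 1 by ring, Real.rpow_add' hLy0 (by linarith), Real.rpow_one]; ring_nf
  -- s = x*(L-y), r = (x-y)*L
  have hsr : (x - y) * L ≤ x * (L - y) := by nlinarith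
  have hr0 : 0 ≤ (x - y) * L := mul_nonneg hxy0 hL.le
  have hs0 : 0 ≤ x * (L - y) := mul_nonneg hx0 hLy0
  have hspow : (x * (L - y)) ^ γ = x ^ γ * (L - y) ^ γ := Real.mul_rpow hx0 hLy0
  have hrpow : ((x - y) * L) ^ γ = (x - y) ^ γ * L ^ γ := Real.mul_rpow hxy0 hL.le
  have hs1 : (x * (L - y)) ^ (γ - 1) = p * q := Real.mul_rpow hx0 hLy0
  have hSid : (x * (L - y)) ^ γ = (x * (L - y)) ^ (γ - 1) * (x * (L - y)) := by
    rw [show γ = (γ - 1) + 1 by ring, Real.rpow_add' hs0 (by linarith), Real.rpow_one]; ring_nf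
  have hRid : ((x - y) * L) ^ γ = ((x - y) * L) ^ (γ - 1) * ((x - y) * L) := by
    rw [show γ = (γ - 1) + 1 by ring, Real.rpow_add' hr0 (by linarith), Real.rpow_one]; ring_nf
  have hmono : ((x - y) * L) ^ (γ - 1) ≤ (x * (L - y)) ^ (γ - 1) :=
    Real.rpow_le_rpow hr0 hsr hγ0
  -- step 1: s^γ - r^γ ≥ s^(γ-1) * (s - r)
  have hstep : (x * (L - y)) ^ (γ - 1) * (x * (L - y) - (x - y) * L) ≤
      (x * (L - y)) ^ γ - ((x - y) * L) ^ γ := by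
    rw [hSid, hRid]
    have h1 : ((x - y) * L) ^ (γ - 1) * ((x - y) * L) ≤
        (x * (L - y)) ^ (γ - 1) * ((x - y) * L) :=
      mul_le_mul_of_nonneg_right hmono hr0
    nlinarith [Real.rpow_nonneg hs0 (γ - 1)]
  have hsub : x * (L - y) - (x - y) * L = y * (L - x) := by ring
  -- step 2: A / L^2 ≤ p * q * (y * (L - x))
  have hfinal : x ^ γ * (L - x) * (y * (L - y) ^ γ) / L ^ 2 ≤ p * q * (y * (L - x)) := by
    rw [div_le_iff₀ (by positivity)]
    rw [hP, hQ]
    have hxLy : x * (L - y) ≤ L * L := mul_le_mul hxL (by linarith) hLy0 hL.le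
    nlinarith [mul_nonneg (mul_nonneg (mul_nonneg hp0 hq0) hy0) hLx0]
  calc x ^ γ * (L - x) * (y * (L - y) ^ γ) / L ^ 2 ≤ p * q * (y * (L - x)) := hfinal
    _ = (x * (L - y)) ^ (γ - 1) * (x * (L - y) - (x - y) * L) := by rw [hs1, hsub]
    _ ≤ (x * (L - y)) ^ γ - ((x - y) * L) ^ γ := hstep
    _ = x ^ γ * (L - y) ^ γ - (x - y) ^ γ * L ^ γ := by rw [hspow, hrpow]

lemma key2 (γ L x y : ℝ) (hγ : 1 ≤ γ) (hL : 0 < L) (hx0 : 0 ≤ x) (hxL : x ≤ L)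
    (hy0 : 0 ≤ y) (hyL : y ≤ L) :
    x ^ γ * (L - x) * (y * (L - y) ^ γ) / L ^ 2 ≤ x ^ γ * (L - y) ^ γ := by
  rw [div_le_iff₀ (by positivity)]
  have hP : 0 ≤ x ^ γ := Real.rpow_nonneg hx0 _
  have hQ : 0 ≤ (L - y) ^ γ := Real.rpow_nonneg (by linarith) _
  nlinarith [mul_nonneg hP hQ, mul_le_mul (show L - x ≤ L by linarith) hyL hy0 hL.le]

theorem stmt_5 (a b μ : ℝ) (ha : 0 < a) (hab : a < b) (hμ2 : 2 < μ) (hμ3 : μ < 3) :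
    ∀ t ∈ Set.Icc a b, ∀ τ ∈ Set.Icc a b,
      (Real.log (t / a) ^ (μ - 1) * Real.log (b / t)) *
          (Real.log (τ / a) * Real.log (b / τ) ^ (μ - 1)) /
          (Real.Gamma μ * Real.log (b / a) ^ (μ + 1)) ≤
        G a b μ t τ := by
  intro t ht τ hτ
  obtain ⟨hat, htb⟩ := ht
  obtain ⟨haτ, hτb⟩ := hτ
  have hb : 0 < b := ha.trans hab
  have ht0 : 0 < t := lt_of_lt_of_le ha hat
  have hτ0 : 0 < τ := lt_of_lt_of_le ha haτ
  set L := Real.log (b / a) with hLdef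
  set x := Real.log (t / a) with hxdef
  set y := Real.log (τ / a) with hydef
  have hbt : Real.log (b / t) = L - x := by
    rw [hLdef, hxdef, Real.log_div hb.ne' ht0.ne', Real.log_div hb.ne' ha.ne',
      Real.log_div ht0.ne' ha.ne']; ring
  have hbτ : Real.log (b / τ) = L - y := by
    rw [hLdef, hydef, Real.log_div hb.ne' hτ0.ne', Real.log_div hb.ne' ha.ne',
      Real.log_div hτ0.ne' ha.ne']; ring
  have htτ : Real.log (t / τ) = x - y := by
    rw [hxdef, hydef, Real.log_div ht0.ne' hτ0.ne', Real.log_div ht0.ne' ha.ne',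
      Real.log_div hτ0.ne' ha.ne']; ring
  have hL : 0 < L := Real.log_pos ((one_lt_div ha).mpr hab)
  have hx0 : 0 ≤ x := Real.log_nonneg ((one_le_div ha).mpr hat)
  have hy0 : 0 ≤ y := Real.log_nonneg ((one_le_div ha).mpr haτ)
  have hxL : x ≤ L := Real.log_le_log (by positivity) (by gcongr)
  have hyL : y ≤ L := Real.log_le_log (by positivity) (by gcongr)
  have hΓ : 0 < Real.Gamma μ := Real.Gamma_pos_of_pos (by linarith)
  have hγ : (1:ℝ) ≤ μ - 1 := by linarith
  have hLγ : 0 < L ^ (μ - 1) := Real.rpow_pos_of_pos hL _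
  have hLμ : L ^ (μ + 1) = L ^ (μ - 1) * L ^ 2 := by
    rw [show μ + 1 = (μ - 1) + 2 by ring, Real.rpow_add hL]
    norm_num [Real.rpow_natCast]
  by_cases hcase : τ ≤ t
  · have hyx : y ≤ x := Real.log_le_log (by positivity) (by gcongr)
    have hk := key1 (μ - 1) L x y hγ hL hx0 hxL hy0 hyL hyx
    rw [div_le_iff₀ (by positivity)] at hk
    simp only [G, if_pos hcase, hbt, hbτ, htτ]
    rw [hLμ, div_le_iff₀ (by positivity)]
    have heq : 1 / (Real.Gamma μ * L ^ (μ - 1)) *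
        (x ^ (μ - 1) * (L - y) ^ (μ - 1) - (x - y) ^ (μ - 1) * L ^ (μ - 1)) *
        (Real.Gamma μ * (L ^ (μ - 1) * L ^ 2)) =
        (x ^ (μ - 1) * (L - y) ^ (μ - 1) - (x - y) ^ (μ - 1) * L ^ (μ - 1)) * L ^ 2 := by
      field_simp
    rw [heq]
    linarith
  · have hk := key2 (μ - 1) L x y hγ hL hx0 hxL hy0 hyL
    rw [div_le_iff₀ (by positivity)] at hk
    simp only [G, if_neg hcase, hbt, hbτ]
    rw [hLμ, div_le_iff₀ (by positivity)]
    have heq : 1 / (Real.Gamma μ * L ^ (μ - 1)) *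
        (x ^ (μ - 1) * (L - y) ^ (μ - 1)) *
        (Real.Gamma μ * (L ^ (μ - 1) * L ^ 2)) =
        (x ^ (μ - 1) * (L - y) ^ (μ - 1)) * L ^ 2 := by
      field_simp
    rw [heq]
    linarith
end

section
/- Let 0 < a < b and 2 < μ < 3, and let G be the Green's function from the Hadamard fractional boundary value problem (defined piecewise via logarithms as above). Then for all t, τ, s ∈ [a, b], G(t,τ) ≥ w(t)·G(s,τ), where w(t) = (ln(t/a))^(μ-1)·(ln(b/t))/(ln(b/a))^μ. -/
open Real Set

set_option maxHeartbeats 1000000 in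
lemma lemA {α : ℝ} (hα : 1 < α) {u v : ℝ} (hv0 : 0 ≤ v) (hv1 : v ≤ 1)
    (hu1 : u ≤ 1) (huv : 1 - v ≤ u) :
    u ^ α * v ^ α - (u + v - 1) ^ α ≤ (1 - v) * v ^ α := by
  have hα0 : (0:ℝ) < α := by linarith
  have hα1 : (0:ℝ) ≤ α - 1 := by linarith
  rcases eq_or_lt_of_le hv1 with hveq | hvlt
  · -- v = 1
    subst hveq
    have e : u + 1 - 1 = u := by ring
    rw [e, Real.one_rpow]
    simp
  rcases eq_or_lt_of_le hv0 with hveq0 | hvpos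
  · -- v = 0, so u = 1
    have hu : u = 1 := le_antisymm hu1 (by linarith)
    subst hu
    have h0 : ((0:ℝ)) ^ α = 0 := Real.zero_rpow (ne_of_gt hα0)
    rw [← hveq0]
    norm_num [h0]
  -- main case 0 < v < 1
  have h1v : 0 < 1 - v := by linarith
  set β : ℝ := α / (α - 1) with hβdef
  have hαm1 : (0:ℝ) < α - 1 := by linarith
  have hβ1 : 1 ≤ β := by
    rw [hβdef, le_div_iff₀ hαm1]; linarith
  have hβα : β * (α - 1) = α := by
    rw [hβdef, div_mul_cancel₀ _ (ne_of_gt hαm1)]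
  have hαβ : β * α = α + β := by
    rw [hβdef]; field_simp; ring
  have hvβ_le : v ^ β ≤ v := by
    have := Real.rpow_le_rpow_of_exponent_ge hvpos hvlt.le hβ1
    simpa using this
  have hvβ_lt1 : v ^ β < 1 := Real.rpow_lt_one hv0 hvlt (by linarith)
  have hden : 0 < 1 - v ^ β := by linarith
  set u₀ : ℝ := (1 - v) / (1 - v ^ β) with hu₀def
  have hu₀pos : 0 < u₀ := div_pos h1v hden
  have hu₀1 : u₀ ≤ 1 := by
    rw [hu₀def, div_le_one hden]
    have := Real.rpow_nonneg hv0 β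
    linarith
  have hu₀lb : 1 - v ≤ u₀ := by
    rw [hu₀def, le_div_iff₀ hden]
    nlinarith [Real.rpow_nonneg hv0 β]
  have hu₀mul : u₀ * (1 - v ^ β) = 1 - v := div_mul_cancel₀ _ (ne_of_gt hden)
  have hw₀ : u₀ + v - 1 = u₀ * v ^ β := by nlinarith [hu₀mul]
  -- the function and its derivative
  set h : ℝ → ℝ := fun x => x ^ α * v ^ α - (x + v - 1) ^ α with hhdef
  have hderiv : ∀ x : ℝ, HasDerivAt h (α * x ^ (α - 1) * v ^ α - α * (x + v - 1) ^ (α - 1)) x := by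
    intro x
    have d1 : HasDerivAt (fun x : ℝ => x ^ α) (α * x ^ (α - 1)) x :=
      Real.hasDerivAt_rpow_const (Or.inr hα.le)
    have d2 : HasDerivAt (fun x : ℝ => (x + v - 1) ^ α) (α * (x + v - 1) ^ (α - 1)) x := by
      have inner : HasDerivAt (fun x : ℝ => x + v - 1) 1 x := by
        have := (hasDerivAt_id x).add_const (v - 1)
        simpa [← add_sub_assoc] using this
      have := inner.rpow_const (p := α) (Or.inr hα.le)
      simpa using this
    exact (d1.mul_const (v ^ α)).sub d2
  -- key: value at u₀
  have hval : h u₀ = (1 - v) * v ^ α * u₀ ^ (α - 1) := by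
    rw [hhdef]
    simp only
    rw [hw₀, Real.mul_rpow hu₀pos.le (Real.rpow_nonneg hv0 β), ← Real.rpow_mul hv0,
      hαβ, Real.rpow_add hvpos]
    have e : u₀ ^ α = u₀ ^ (α - 1) * u₀ := by
      rw [← Real.rpow_add_one (ne_of_gt hu₀pos)]; ring_nf
    rw [e]
    linear_combination (u₀ ^ (α - 1) * v ^ α) * hu₀mul
  have hval_le : h u₀ ≤ (1 - v) * v ^ α := by
    rw [hval]
    have h1 : u₀ ^ (α - 1) ≤ 1 := Real.rpow_le_one hu₀pos.le hu₀1 hα1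
    have h2 : 0 ≤ (1 - v) * v ^ α := mul_nonneg h1v.le (Real.rpow_nonneg hv0 α)
    exact mul_le_of_le_one_right h2 h1
  -- monotonicity on the two intervals
  have hcont : Continuous h := continuous_iff_continuousAt.mpr fun x => (hderiv x).continuousAt
  have hdiff : Differentiable ℝ h := fun x => (hderiv x).differentiableAt
  have hmono : MonotoneOn h (Icc (1 - v) u₀) := by
    apply monotoneOn_of_deriv_nonneg (convex_Icc _ _) hcont.continuousOn
      hdiff.differentiableOn
    intro x hx
    rw [interior_Icc] at hx
    rw [(hderiv x).deriv]
    have hx0 : 0 < x := lt_trans h1v hx.1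
    have hwx : 0 ≤ x + v - 1 := by linarith [hx.1]
    have hle : x + v - 1 ≤ x * v ^ β := by
      have hm : x * (1 - v ^ β) ≤ u₀ * (1 - v ^ β) :=
        mul_le_mul_of_nonneg_right hx.2.le hden.le
      nlinarith [hu₀mul]
    have key : (x + v - 1) ^ (α - 1) ≤ (x * v ^ β) ^ (α - 1) :=
      Real.rpow_le_rpow hwx hle hα1
    have heq : (x * v ^ β) ^ (α - 1) = x ^ (α - 1) * v ^ α := by
      rw [Real.mul_rpow hx0.le (Real.rpow_nonneg hv0 β), ← Real.rpow_mul hv0, hβα]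
    rw [heq] at key
    have := mul_nonneg hα0.le (sub_nonneg.mpr key)
    linarith [this]
  have hanti : AntitoneOn h (Icc u₀ 1) := by
    apply antitoneOn_of_deriv_nonpos (convex_Icc _ _) hcont.continuousOn
      hdiff.differentiableOn
    intro x hx
    rw [interior_Icc] at hx
    rw [(hderiv x).deriv]
    have hx0 : 0 < x := lt_trans hu₀pos hx.1
    have hle : x * v ^ β ≤ x + v - 1 := by
      have hm : u₀ * (1 - v ^ β) ≤ x * (1 - v ^ β) :=
        mul_le_mul_of_nonneg_right hx.1.le hden.le
      nlinarith [hu₀mul]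
    have hxvβ : 0 ≤ x * v ^ β := mul_nonneg hx0.le (Real.rpow_nonneg hv0 β)
    have key : (x * v ^ β) ^ (α - 1) ≤ (x + v - 1) ^ (α - 1) :=
      Real.rpow_le_rpow hxvβ hle hα1
    have heq : (x * v ^ β) ^ (α - 1) = x ^ (α - 1) * v ^ α := by
      rw [Real.mul_rpow hx0.le (Real.rpow_nonneg hv0 β), ← Real.rpow_mul hv0, hβα]
    rw [heq] at key
    have := mul_nonneg hα0.le (sub_nonneg.mpr key)
    linarith [this]
  -- conclude
  have hfinal : h u ≤ h u₀ := by
    rcases le_total u u₀ with hc | hc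
    · exact hmono ⟨huv, hc⟩ ⟨hu₀lb, le_refl _⟩ hc
    · exact hanti ⟨le_refl _, hu₀1⟩ ⟨hc, hu1⟩ hc
  calc u ^ α * v ^ α - (u + v - 1) ^ α = h u := rfl
    _ ≤ h u₀ := hfinal
    _ ≤ (1 - v) * v ^ α := hval_le

lemma lemB {α : ℝ} (hα : 1 ≤ α) {u v : ℝ} (hu0 : 0 ≤ u) (hu1 : u ≤ 1)
    (hv0 : 0 ≤ v) (hv1 : v ≤ 1) (hw : 0 ≤ u + v - 1) :
    u ^ α * v ^ α * ((1 - u) * (1 - v)) ≤ u ^ α * v ^ α - (u + v - 1) ^ α := by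
  have hα0 : (0:ℝ) < α := by linarith
  have hPα : (u * v) ^ α = u ^ α * v ^ α := Real.mul_rpow hu0 hv0
  set P : ℝ := u * v with hPdef
  set c : ℝ := (1 - u) * (1 - v) with hcdef
  have hc0 : 0 ≤ c := mul_nonneg (by linarith) (by linarith)
  have hP1 : P ≤ 1 := by nlinarith
  have hwPc : u + v - 1 = P - c := by rw [hPdef, hcdef]; ring
  rcases eq_or_lt_of_le (mul_nonneg hu0 hv0) with hP0 | hPpos
  · -- P = 0, hence P - c = 0 and c = 0
    have hPc0 : P - c = 0 := by
      have h1 : 0 ≤ P - c := by rw [← hwPc]; exact hw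
      have : P = 0 := hP0.symm
      nlinarith
    have hPz : P ^ α = 0 := by
      rw [hPdef, ← hP0, Real.zero_rpow (ne_of_gt hα0)]
    rw [hwPc, hPc0, Real.zero_rpow (ne_of_gt hα0), ← hPα, hPz]
    simp
  · -- P > 0
    rw [hwPc, ← hPα]
    have hbase0 : 0 ≤ 1 - c / P := by
      have : 0 ≤ P - c := by rw [← hwPc]; exact hw
      rw [sub_nonneg, div_le_one hPpos]; linarith
    have hbase1 : 1 - c / P ≤ 1 := by
      have : 0 ≤ c / P := div_nonneg hc0 hPpos.le
      linarith
    have e1 : P - c = P * (1 - c / P) := by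
      have hPne : P ≠ 0 := ne_of_gt hPpos
      have hcP : P * (c / P) = c := by rw [mul_div_assoc', mul_div_cancel_left₀ c hPne]
      linear_combination hcP
    have e2 : (P - c) ^ α = P ^ α * (1 - c / P) ^ α := by
      rw [e1, Real.mul_rpow hPpos.le hbase0]
    have h3 : (1 - c / P) ^ α ≤ 1 - c / P := by
      rcases eq_or_lt_of_le hbase0 with h0 | hpos
      · rw [← h0, Real.zero_rpow (ne_of_gt hα0)]
      · have := Real.rpow_le_rpow_of_exponent_ge hpos hbase1 hα
        simpa using this
    have h4 : (P - c) ^ α ≤ P ^ α * (1 - c / P) := by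
      rw [e2]
      exact mul_le_mul_of_nonneg_left h3 (Real.rpow_nonneg (by positivity) α)
    have e5 : P ^ α * (1 - c / P) = P ^ α - P ^ (α - 1) * c := by
      have : P ^ α / P = P ^ (α - 1) := by
        rw [← Real.rpow_sub_one (ne_of_gt hPpos)]
      field_simp
      rw [← this]
      field_simp
    have h6 : P ^ α ≤ P ^ (α - 1) :=
      Real.rpow_le_rpow_of_exponent_ge hPpos hP1 (by linarith)
    have h7 : P ^ α * c ≤ P ^ (α - 1) * c := mul_le_mul_of_nonneg_right h6 hc0
    rw [e5] at h4
    linarith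

lemma lemA' {α L : ℝ} (hα : 1 < α) (hL : 0 < L) {x y : ℝ} (hx0 : 0 ≤ x) (hxL : x ≤ L)
    (hy0 : 0 ≤ y) (hyL : y ≤ L) (hw : L ≤ x + y) :
    x ^ α * y ^ α - (x + y - L) ^ α * L ^ α ≤ (L - y) * y ^ α * L ^ (α - 1) := by
  have hw0 : (0:ℝ) ≤ x + y - L := by linarith
  have key := lemA hα (v := y / L) (u := x / L)
    (div_nonneg hy0 hL.le) ((div_le_one hL).mpr hyL)
    ((div_le_one hL).mpr hxL)
    (by rw [sub_le_iff_le_add, ← add_div]; exact (one_le_div hL).mpr hw)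
  have e3 : x / L + y / L - 1 = (x + y - L) / L := by field_simp
  have e5 : (1:ℝ) - y / L = (L - y) / L := by field_simp
  rw [e3, e5, Real.div_rpow hx0 hL.le, Real.div_rpow hy0 hL.le,
    Real.div_rpow hw0 hL.le] at key
  have hLα : (0:ℝ) < L ^ α := Real.rpow_pos_of_pos hL α
  have eL : L ^ (α - 1) = L ^ α / L := Real.rpow_sub_one (ne_of_gt hL) α
  have lhs_eq : x ^ α * y ^ α - (x + y - L) ^ α * L ^ α =
      (x ^ α / L ^ α * (y ^ α / L ^ α) - (x + y - L) ^ α / L ^ α) * (L ^ α * L ^ α) := by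
    field_simp
  have rhs_eq : (L - y) * y ^ α * L ^ (α - 1) =
      (L - y) / L * (y ^ α / L ^ α) * (L ^ α * L ^ α) := by
    rw [eL]; field_simp
  rw [lhs_eq, rhs_eq]
  exact mul_le_mul_of_nonneg_right key (by positivity)

lemma lemB' {α L : ℝ} (hα : 1 ≤ α) (hL : 0 < L) {x y : ℝ} (hx0 : 0 ≤ x) (hxL : x ≤ L)
    (hy0 : 0 ≤ y) (hyL : y ≤ L) (hw : L ≤ x + y) :
    x ^ α * y ^ α * ((L - x) * (L - y)) ≤ (x ^ α * y ^ α - (x + y - L) ^ α * L ^ α) * L ^ 2 := by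
  have hw0 : (0:ℝ) ≤ x + y - L := by linarith
  have key := lemB hα (u := x / L) (v := y / L)
    (div_nonneg hx0 hL.le) ((div_le_one hL).mpr hxL)
    (div_nonneg hy0 hL.le) ((div_le_one hL).mpr hyL)
    (by rw [← add_div, sub_nonneg, le_div_iff₀ hL]; linarith)
  have e3 : x / L + y / L - 1 = (x + y - L) / L := by field_simp
  have e4 : (1:ℝ) - x / L = (L - x) / L := by field_simp
  have e5 : (1:ℝ) - y / L = (L - y) / L := by field_simp
  rw [e3, e4, e5, Real.div_rpow hx0 hL.le, Real.div_rpow hy0 hL.le,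
    Real.div_rpow hw0 hL.le] at key
  have hLα : (0:ℝ) < L ^ α := Real.rpow_pos_of_pos hL α
  have lhs_eq : x ^ α * y ^ α * ((L - x) * (L - y)) =
      (x ^ α / L ^ α * (y ^ α / L ^ α) * ((L - x) / L * ((L - y) / L))) *
        (L ^ α * L ^ α * L ^ 2) := by
    field_simp
    try ring
    try tauto
  have rhs_eq : (x ^ α * y ^ α - (x + y - L) ^ α * L ^ α) * L ^ 2 =
      (x ^ α / L ^ α * (y ^ α / L ^ α) - (x + y - L) ^ α / L ^ α) *
        (L ^ α * L ^ α * L ^ 2) := by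
    field_simp
    try ring
    try tauto
  rw [lhs_eq, rhs_eq]
  exact mul_le_mul_of_nonneg_right key (by positivity)

set_option maxHeartbeats 1000000 in
theorem stmt_6 (a b μ : ℝ) (ha : 0 < a) (hab : a < b) (hμ2 : 2 < μ) (hμ3 : μ < 3) :
    ∀ t ∈ Set.Icc a b, ∀ τ ∈ Set.Icc a b, ∀ s ∈ Set.Icc a b,
      (Real.log (t / a) ^ (μ - 1) * Real.log (b / t) / Real.log (b / a) ^ μ) * G a b μ s τ ≤
        G a b μ t τ := by
  intro t ht τ hτ s hs
  obtain ⟨hta, htb⟩ := ht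
  obtain ⟨hτa, hτb⟩ := hτ
  obtain ⟨hsa, hsb⟩ := hs
  have hb : 0 < b := lt_trans ha hab
  have ht0 : 0 < t := lt_of_lt_of_le ha hta
  have hτ0 : 0 < τ := lt_of_lt_of_le ha hτa
  have hs0 : 0 < s := lt_of_lt_of_le ha hsa
  have hΓ : 0 < Real.Gamma μ := Real.Gamma_pos_of_pos (by linarith)
  have hα : (1:ℝ) < μ - 1 := by linarith
  have hL : 0 < Real.log (b / a) := Real.log_pos ((one_lt_div ha).mpr hab)
  have lba : Real.log (b / a) = Real.log b - Real.log a := Real.log_div (ne_of_gt hb) (ne_of_gt ha)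
  have lta : Real.log (t / a) = Real.log t - Real.log a := Real.log_div (ne_of_gt ht0) (ne_of_gt ha)
  have lbt : Real.log (b / t) = Real.log b - Real.log t := Real.log_div (ne_of_gt hb) (ne_of_gt ht0)
  have lτa : Real.log (τ / a) = Real.log τ - Real.log a := Real.log_div (ne_of_gt hτ0) (ne_of_gt ha)
  have lbτ : Real.log (b / τ) = Real.log b - Real.log τ := Real.log_div (ne_of_gt hb) (ne_of_gt hτ0)
  have lsa : Real.log (s / a) = Real.log s - Real.log a := Real.log_div (ne_of_gt hs0) (ne_of_gt ha)
  have mta : Real.log a ≤ Real.log t := Real.log_le_log ha hta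
  have mtb : Real.log t ≤ Real.log b := Real.log_le_log ht0 htb
  have mτa : Real.log a ≤ Real.log τ := Real.log_le_log ha hτa
  have mτb : Real.log τ ≤ Real.log b := Real.log_le_log hτ0 hτb
  have msa : Real.log a ≤ Real.log s := Real.log_le_log ha hsa
  have msb : Real.log s ≤ Real.log b := Real.log_le_log hs0 hsb
  have hxt0 : 0 ≤ Real.log (t / a) := by rw [lta]; linarith
  have hxtL : Real.log (t / a) ≤ Real.log (b / a) := by rw [lta, lba]; linarith
  have hyt0 : 0 ≤ Real.log (b / t) := by rw [lbt]; linarith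
  have hytL : Real.log (b / t) ≤ Real.log (b / a) := by rw [lbt, lba]; linarith
  have hxτ0 : 0 ≤ Real.log (τ / a) := by rw [lτa]; linarith
  have hxτL : Real.log (τ / a) ≤ Real.log (b / a) := by rw [lτa, lba]; linarith
  have hyτ0 : 0 ≤ Real.log (b / τ) := by rw [lbτ]; linarith
  have hyτL : Real.log (b / τ) ≤ Real.log (b / a) := by rw [lbτ, lba]; linarith
  have hxs0 : 0 ≤ Real.log (s / a) := by rw [lsa]; linarith
  have hxsL : Real.log (s / a) ≤ Real.log (b / a) := by rw [lsa, lba]; linarith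
  have hLα : (0:ℝ) < Real.log (b / a) ^ (μ - 1) := Real.rpow_pos_of_pos hL _
  have hΓLα : 0 < Real.Gamma μ * Real.log (b / a) ^ (μ - 1) := mul_pos hΓ hLα
  have hD : 0 < Real.Gamma μ * Real.log (b / a) ^ (μ - 1) * Real.log (b / a) ^ 2 :=
    mul_pos hΓLα (pow_pos hL 2)
  -- upper bound for G a b μ s τ
  have hupper : G a b μ s τ ≤
      Real.log (τ / a) * Real.log (b / τ) ^ (μ - 1) / (Real.Gamma μ * Real.log (b / a)) := by
    unfold G
    split_ifs with hcase
    · -- τ ≤ s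
      have hw : Real.log (b / a) ≤ Real.log (s / a) + Real.log (b / τ) := by
        have hm : Real.log τ ≤ Real.log s := Real.log_le_log hτ0 hcase
        rw [lsa, lbτ, lba]; linarith
      have hlsτ : Real.log (s / τ) =
          Real.log (s / a) + Real.log (b / τ) - Real.log (b / a) := by
        rw [Real.log_div (ne_of_gt hs0) (ne_of_gt hτ0), lsa, lbτ, lba]; ring
      have key := lemA' hα hL hxs0 hxsL hyτ0 hyτL hw
      have hLτa : Real.log (b / a) - Real.log (b / τ) = Real.log (τ / a) := by
        rw [lτa, lbτ, lba]; ring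
      rw [hLτa] at key
      rw [hlsτ]
      refine le_trans (mul_le_mul_of_nonneg_left key (one_div_nonneg.mpr hΓLα.le)) (le_of_eq ?_)
      rw [Real.rpow_sub_one (ne_of_gt hL) (μ - 1)]
      field_simp
    · -- s < τ
      have hsτ : s < τ := not_le.mp hcase
      have hxsτ : Real.log (s / a) ≤ Real.log (τ / a) := by
        have hm : Real.log s ≤ Real.log τ := Real.log_le_log hs0 hsτ.le
        rw [lsa, lτa]; linarith
      have h1 : Real.log (s / a) ^ (μ - 1) ≤
          Real.log (τ / a) * Real.log (b / a) ^ (μ - 1 - 1) := by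
        rcases eq_or_lt_of_le hxs0 with h0 | hxspos
        · rw [← h0, Real.zero_rpow (ne_of_gt (by linarith : (0:ℝ) < μ - 1))]
          exact mul_nonneg hxτ0 (Real.rpow_nonneg hL.le _)
        · have e : Real.log (s / a) ^ (μ - 1) =
              Real.log (s / a) ^ (μ - 1 - 1) * Real.log (s / a) := by
            rw [← Real.rpow_add_one (ne_of_gt hxspos) (μ - 1 - 1)]
            congr 1
            ring
          rw [e]
          have h2 : Real.log (s / a) ^ (μ - 1 - 1) ≤ Real.log (b / a) ^ (μ - 1 - 1) :=
            Real.rpow_le_rpow hxs0 hxsL (by linarith)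
          calc Real.log (s / a) ^ (μ - 1 - 1) * Real.log (s / a)
              ≤ Real.log (b / a) ^ (μ - 1 - 1) * Real.log (τ / a) :=
                mul_le_mul h2 hxsτ hxs0 (Real.rpow_nonneg hL.le _)
            _ = Real.log (τ / a) * Real.log (b / a) ^ (μ - 1 - 1) := mul_comm _ _
      have key : Real.log (s / a) ^ (μ - 1) * Real.log (b / τ) ^ (μ - 1) ≤
          Real.log (τ / a) * Real.log (b / a) ^ (μ - 1 - 1) * Real.log (b / τ) ^ (μ - 1) :=
        mul_le_mul_of_nonneg_right h1 (Real.rpow_nonneg hyτ0 _)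
      refine le_trans (mul_le_mul_of_nonneg_left key (one_div_nonneg.mpr hΓLα.le)) (le_of_eq ?_)
      rw [Real.rpow_sub_one (ne_of_gt hL) (μ - 1)]
      field_simp
  -- lower bound for G a b μ t τ
  have hlower : Real.log (t / a) ^ (μ - 1) * Real.log (b / t) *
      (Real.log (τ / a) * Real.log (b / τ) ^ (μ - 1)) /
      (Real.Gamma μ * Real.log (b / a) ^ (μ - 1) * Real.log (b / a) ^ 2) ≤ G a b μ t τ := by
    unfold G
    split_ifs with hcase
    · -- τ ≤ t
      have hw : Real.log (b / a) ≤ Real.log (t / a) + Real.log (b / τ) := by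
        have hm : Real.log τ ≤ Real.log t := Real.log_le_log hτ0 hcase
        rw [lta, lbτ, lba]; linarith
      have hltτ : Real.log (t / τ) =
          Real.log (t / a) + Real.log (b / τ) - Real.log (b / a) := by
        rw [Real.log_div (ne_of_gt ht0) (ne_of_gt hτ0), lta, lbτ, lba]; ring
      have key := lemB' (le_of_lt hα) hL hxt0 hxtL hyτ0 hyτL hw
      have e1 : Real.log (b / a) - Real.log (t / a) = Real.log (b / t) := by
        rw [lta, lbt, lba]; ring
      have e2 : Real.log (b / a) - Real.log (b / τ) = Real.log (τ / a) := by
        rw [lτa, lbτ, lba]; ring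
      rw [e1, e2] at key
      rw [hltτ]
      calc Real.log (t / a) ^ (μ - 1) * Real.log (b / t) *
            (Real.log (τ / a) * Real.log (b / τ) ^ (μ - 1)) /
            (Real.Gamma μ * Real.log (b / a) ^ (μ - 1) * Real.log (b / a) ^ 2)
          = Real.log (t / a) ^ (μ - 1) * Real.log (b / τ) ^ (μ - 1) *
            (Real.log (b / t) * Real.log (τ / a)) /
            (Real.Gamma μ * Real.log (b / a) ^ (μ - 1) * Real.log (b / a) ^ 2) := by ring
        _ ≤ (Real.log (t / a) ^ (μ - 1) * Real.log (b / τ) ^ (μ - 1) -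
              (Real.log (t / a) + Real.log (b / τ) - Real.log (b / a)) ^ (μ - 1) *
                Real.log (b / a) ^ (μ - 1)) * Real.log (b / a) ^ 2 /
            (Real.Gamma μ * Real.log (b / a) ^ (μ - 1) * Real.log (b / a) ^ 2) :=
              (div_le_div_iff_of_pos_right hD).mpr key
        _ = 1 / (Real.Gamma μ * Real.log (b / a) ^ (μ - 1)) *
            (Real.log (t / a) ^ (μ - 1) * Real.log (b / τ) ^ (μ - 1) -
              (Real.log (t / a) + Real.log (b / τ) - Real.log (b / a)) ^ (μ - 1) *
                Real.log (b / a) ^ (μ - 1)) := by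
            field_simp
    · -- t < τ
      have hprod : Real.log (b / t) * Real.log (τ / a) ≤ Real.log (b / a) ^ 2 := by
        nlinarith [hyt0, hxτ0, hytL, hxτL]
      have key : Real.log (t / a) ^ (μ - 1) * Real.log (b / t) *
          (Real.log (τ / a) * Real.log (b / τ) ^ (μ - 1)) ≤
          Real.log (t / a) ^ (μ - 1) * Real.log (b / τ) ^ (μ - 1) * Real.log (b / a) ^ 2 := by
        have hnn : 0 ≤ Real.log (t / a) ^ (μ - 1) * Real.log (b / τ) ^ (μ - 1) :=
          mul_nonneg (Real.rpow_nonneg hxt0 _) (Real.rpow_nonneg hyτ0 _)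
        calc Real.log (t / a) ^ (μ - 1) * Real.log (b / t) *
              (Real.log (τ / a) * Real.log (b / τ) ^ (μ - 1))
            = Real.log (t / a) ^ (μ - 1) * Real.log (b / τ) ^ (μ - 1) *
              (Real.log (b / t) * Real.log (τ / a)) := by ring
          _ ≤ Real.log (t / a) ^ (μ - 1) * Real.log (b / τ) ^ (μ - 1) *
              Real.log (b / a) ^ 2 := mul_le_mul_of_nonneg_left hprod hnn
      calc Real.log (t / a) ^ (μ - 1) * Real.log (b / t) *
            (Real.log (τ / a) * Real.log (b / τ) ^ (μ - 1)) /
            (Real.Gamma μ * Real.log (b / a) ^ (μ - 1) * Real.log (b / a) ^ 2)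
          ≤ Real.log (t / a) ^ (μ - 1) * Real.log (b / τ) ^ (μ - 1) * Real.log (b / a) ^ 2 /
            (Real.Gamma μ * Real.log (b / a) ^ (μ - 1) * Real.log (b / a) ^ 2) :=
              (div_le_div_iff_of_pos_right hD).mpr key
        _ = 1 / (Real.Gamma μ * Real.log (b / a) ^ (μ - 1)) *
            (Real.log (t / a) ^ (μ - 1) * Real.log (b / τ) ^ (μ - 1)) := by
            field_simp
  -- combine
  have hLμ : Real.log (b / a) ^ μ = Real.log (b / a) ^ (μ - 1) * Real.log (b / a) := by
    rw [← Real.rpow_add_one (ne_of_gt hL) (μ - 1)]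
    congr 1
    ring
  have hcoef : 0 ≤ Real.log (t / a) ^ (μ - 1) * Real.log (b / t) / Real.log (b / a) ^ μ :=
    div_nonneg (mul_nonneg (Real.rpow_nonneg hxt0 _) hyt0) (Real.rpow_nonneg hL.le _)
  calc (Real.log (t / a) ^ (μ - 1) * Real.log (b / t) / Real.log (b / a) ^ μ) * G a b μ s τ
      ≤ (Real.log (t / a) ^ (μ - 1) * Real.log (b / t) / Real.log (b / a) ^ μ) *
        (Real.log (τ / a) * Real.log (b / τ) ^ (μ - 1) / (Real.Gamma μ * Real.log (b / a))) :=
        mul_le_mul_of_nonneg_left hupper hcoef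
    _ = Real.log (t / a) ^ (μ - 1) * Real.log (b / t) *
        (Real.log (τ / a) * Real.log (b / τ) ^ (μ - 1)) /
        (Real.Gamma μ * Real.log (b / a) ^ (μ - 1) * Real.log (b / a) ^ 2) := by
        rw [hLμ]
        rw [div_mul_div_comm]
        congr 1 <;> ring
    _ ≤ G a b μ t τ := hlower
end

section
/- Let 0 < a < b and 2 < μ < 3, and let G be the Green's function from the Hadamard fractional boundary value problem. Then G(t,τ) ≥ 0 for all t, τ ∈ [a, b], and G(t,τ) > 0 for all t, τ ∈ (a, b). -/
theorem stmt_7 (a b μ : ℝ) (ha : 0 < a) (hab : a < b) (hμ2 : 2 < μ) (hμ3 : μ < 3) :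
    (∀ t ∈ Set.Icc a b, ∀ τ ∈ Set.Icc a b, 0 ≤ G a b μ t τ) ∧
      (∀ t ∈ Set.Ioo a b, ∀ τ ∈ Set.Ioo a b, 0 < G a b μ t τ) := by
  have hb : 0 < b := ha.trans hab
  have hL : 0 < Real.log (b / a) := Real.log_pos (by rw [lt_div_iff₀ ha]; linarith)
  have hp : 0 < μ - 1 := by linarith
  have hΓ : 0 < Real.Gamma μ := Real.Gamma_pos_of_pos (by linarith)
  have hc : 0 < 1 / (Real.Gamma μ * Real.log (b / a) ^ (μ - 1)) := by positivity
  constructor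
  · rintro t ⟨hta, htb⟩ τ ⟨hτa, hτb⟩
    have ht0 : 0 < t := lt_of_lt_of_le ha hta
    have hτ0 : 0 < τ := lt_of_lt_of_le ha hτa
    unfold G
    split_ifs with h
    · apply mul_nonneg hc.le
      have hu : 0 ≤ Real.log (t / a) := Real.log_nonneg (by rw [le_div_iff₀ ha]; linarith)
      have hv : 0 ≤ Real.log (b / τ) := Real.log_nonneg (by rw [le_div_iff₀ hτ0]; linarith)
      have hw : 0 ≤ Real.log (t / τ) := Real.log_nonneg (by rw [le_div_iff₀ hτ0]; linarith)
      have hkey : Real.log (t / τ) * Real.log (b / a) ≤ Real.log (t / a) * Real.log (b / τ) := by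
        rw [Real.log_div ht0.ne' hτ0.ne', Real.log_div hb.ne' ha.ne',
          Real.log_div ht0.ne' ha.ne', Real.log_div hb.ne' hτ0.ne']
        have h1 : Real.log t ≤ Real.log b := Real.log_le_log ht0 htb
        have h2 : Real.log a ≤ Real.log τ := Real.log_le_log ha hτa
        nlinarith [mul_nonneg (sub_nonneg.2 h1) (sub_nonneg.2 h2)]
      rw [sub_nonneg, ← Real.mul_rpow hw hL.le, ← Real.mul_rpow hu hv]
      exact Real.rpow_le_rpow (mul_nonneg hw hL.le) hkey hp.le
    · apply mul_nonneg hc.le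
      apply mul_nonneg
      · exact Real.rpow_nonneg (Real.log_nonneg (by rw [le_div_iff₀ ha]; linarith)) _
      · exact Real.rpow_nonneg (Real.log_nonneg (by rw [le_div_iff₀ hτ0]; linarith)) _
  · rintro t ⟨hta, htb⟩ τ ⟨hτa, hτb⟩
    have ht0 : 0 < t := ha.trans hta
    have hτ0 : 0 < τ := ha.trans hτa
    have hu : 0 < Real.log (t / a) := Real.log_pos (by rw [lt_div_iff₀ ha]; linarith)
    have hv : 0 < Real.log (b / τ) := Real.log_pos (by rw [lt_div_iff₀ hτ0]; linarith)
    unfold G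
    split_ifs with h
    · apply mul_pos hc
      have hw : 0 ≤ Real.log (t / τ) := Real.log_nonneg (by rw [le_div_iff₀ hτ0]; linarith)
      have hkey : Real.log (t / τ) * Real.log (b / a) < Real.log (t / a) * Real.log (b / τ) := by
        rw [Real.log_div ht0.ne' hτ0.ne', Real.log_div hb.ne' ha.ne',
          Real.log_div ht0.ne' ha.ne', Real.log_div hb.ne' hτ0.ne']
        have h1 : Real.log t < Real.log b := Real.log_lt_log ht0 htb
        have h2 : Real.log a < Real.log τ := Real.log_lt_log ha hτa
        nlinarith [mul_pos (sub_pos.2 h1) (sub_pos.2 h2)]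
      rw [sub_pos, ← Real.mul_rpow hw hL.le, ← Real.mul_rpow hu.le hv.le]
      exact Real.rpow_lt_rpow (mul_nonneg hw hL.le) hkey hp
    · exact mul_pos hc (mul_pos (Real.rpow_pos_of_pos hu _) (Real.rpow_pos_of_pos hv _))
end

section
/- Let 0 < a < b, 2 < μ < 3, let G be the Green's function from the Hadamard fractional boundary value problem, and let h : [a,b] → ℝ be continuous and nonnegative. Define (Tx)(t) = ∫_a^b G(t,τ)·h(τ)·(1/τ) dτ. Then for all t, s ∈ [a,b], (Th)(t) ≥ w(t)·(Th)(s), where w(t) = (ln(t/a))^(μ-1)·(ln(b/t))/(ln(b/a))^μ; consequently (Th)(t) ≥ w(t)·sup_{s ∈ [a,b]}(Th)(s), i.e., Th lies in the cone P = { x ∈ C[a,b] : x(t) ≥ w(t)·‖x‖ }. -/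
open Real

-- x^p = x^(p-1) * x for x ≥ 0
lemma rpow_split {x p : ℝ} (hx : 0 ≤ x) (hp : 0 < p) : x ^ p = x ^ (p-1) * x := by
  rcases hx.eq_or_lt with rfl | hx'
  · simp [Real.zero_rpow hp.ne']
  · rw [← Real.rpow_add_one hx'.ne', sub_add_cancel]

-- polynomial step for key2
lemma poly_step {q s : ℝ} (hq0 : 0 < q) (hq1 : q < 1) (hs0 : 0 ≤ s) (hs1 : s ≤ 1) :
    (1 + q) * (s * (1 - q * s)) ≤ 1 := by
  rcases le_or_gt (1/3) q with hc | hc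
  · nlinarith [sq_nonneg (2*q*s - 1), mul_nonneg hq0.le hs0]
  · nlinarith [mul_nonneg (sub_nonneg.2 hs1) (by nlinarith : (0:ℝ) ≤ 1 - q - q*s), sq_nonneg q]

-- key2 : p * z^(p-1) * (L - z) ≤ L^p
lemma key2_s13 {z L p : ℝ} (hz : 0 ≤ z) (hzL : z ≤ L) (hL : 0 < L) (hp1 : 1 < p) (hp2 : p < 2) :
    p * z ^ (p-1) * (L - z) ≤ L ^ p := by
  have hq0 : 0 < p - 1 := by linarith
  have hq1 : p - 1 < 1 := by linarith
  have hd0 : 0 ≤ z / L := div_nonneg hz hL.le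
  have hd1 : z / L ≤ 1 := (div_le_one hL).2 hzL
  have hb : (z / L) ^ (p-1) ≤ 1 + (p-1) * (z/L - 1) := by
    have := rpow_one_add_le_one_add_mul_self (s := z/L - 1) (by linarith) hq0.le hq1.le
    simpa using this
  have hzq : z ^ (p-1) = L ^ (p-1) * (z/L) ^ (p-1) := by
    rw [← Real.mul_rpow hL.le hd0, mul_div_cancel₀ _ hL.ne']
  have hLp : L ^ p = L ^ (p-1) * L := rpow_split hL.le (by linarith)
  have hLq : 0 ≤ L ^ (p-1) := Real.rpow_nonneg hL.le _
  -- reduce to polynomial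
  have hpoly : p * ((1 + (p-1) * (z/L - 1)) * (L - z)) ≤ L := by
    have h1 := poly_step hq0 hq1 (s := 1 - z/L) (by linarith) (by linarith)
    calc p * ((1 + (p-1) * (z/L - 1)) * (L - z))
        = L * ((1 + (p-1)) * ((1 - z/L) * (1 - (p-1) * (1 - z/L)))) := by
          field_simp; ring
      _ ≤ L * 1 := mul_le_mul_of_nonneg_left h1 hL.le
      _ = L := mul_one L
  calc p * z ^ (p-1) * (L - z) = L ^ (p-1) * (p * ((z/L) ^ (p-1) * (L - z))) := by
        rw [hzq]; ring
    _ ≤ L ^ (p-1) * (p * ((1 + (p-1) * (z/L - 1)) * (L - z))) := by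
        apply mul_le_mul_of_nonneg_left _ hLq
        apply mul_le_mul_of_nonneg_left _ (by linarith : (0:ℝ) ≤ p)
        exact mul_le_mul_of_nonneg_right hb (by linarith)
    _ ≤ L ^ (p-1) * L := mul_le_mul_of_nonneg_left hpoly hLq
    _ = L ^ p := hLp.symm

-- MVT bound: A^p - B^p ≤ p * A^(p-1) * (A - B) for 0 ≤ B ≤ A
lemma mvt_bound {A B p : ℝ} (hB : 0 ≤ B) (hBA : B ≤ A) (hp : 1 ≤ p) :
    A ^ p - B ^ p ≤ p * A ^ (p-1) * (A - B) := by
  have hA : 0 ≤ A := hB.trans hBA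
  rcases hA.eq_or_lt with rfl | hA'
  · have : B = 0 := le_antisymm hBA hB
    simp [this, Real.zero_rpow (by positivity : p ≠ 0)]
  · have hs : -1 ≤ B / A - 1 := by
      have : 0 ≤ B / A := div_nonneg hB hA'.le
      linarith
    have hbern := one_add_mul_self_le_rpow_one_add hs hp
    rw [add_sub_cancel] at hbern
    -- (B/A)^p = B^p / A^p
    have hdiv : (B / A) ^ p = B ^ p / A ^ p := Real.div_rpow hB hA'.le p
    have hApos : 0 < A ^ p := Real.rpow_pos_of_pos hA' p
    have hAq : A ^ p = A ^ (p-1) * A := rpow_split hA'.le (by linarith)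
    rw [hdiv] at hbern
    have h2 : A ^ p * (1 + p * (B / A - 1)) ≤ B ^ p := by
      calc A ^ p * (1 + p * (B / A - 1)) ≤ A ^ p * (B ^ p / A ^ p) :=
            mul_le_mul_of_nonneg_left hbern hApos.le
        _ = B ^ p := by field_simp
    have h3 : A ^ p * (1 + p * (B / A - 1)) = A ^ p - p * A ^ (p-1) * (A - B) := by
      rw [hAq]; field_simp; ring
    linarith

-- lower bound LB3
lemma lb3 {p L u v : ℝ} (hp1 : 1 < p) (hp2 : p < 2) (hL : 0 < L)
    (hu0 : 0 ≤ u) (huL : u ≤ L) (hv0 : 0 ≤ v) (hvL : v ≤ L) (hvu : v ≤ u) :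
    u ^ (p-1) * (L-v) ^ (p-1) * (v*(L-u)) ≤ u ^ p * (L-v) ^ p - (u-v) ^ p * L ^ p := by
  have hLv : (0:ℝ) ≤ L - v := by linarith
  have e1 : u ^ p * (L-v) ^ p = u ^ (p-1) * (L-v) ^ (p-1) * (u*(L-v)) := by
    rw [rpow_split hu0 (by linarith), rpow_split hLv (by linarith)]; ring
  have e2 : (u-v) ^ p * L ^ p = ((u-v)*L) ^ (p-1) * ((u-v)*L) := by
    rw [← Real.mul_rpow (by linarith) hL.le, rpow_split (mul_nonneg (by linarith) hL.le) (by linarith)]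
  have hle : ((u-v)*L) ^ (p-1) ≤ u ^ (p-1) * (L-v) ^ (p-1) := by
    rw [← Real.mul_rpow hu0 hLv]
    exact Real.rpow_le_rpow (mul_nonneg (by linarith) hL.le) (by nlinarith) (by linarith)
  have h4 : ((u-v)*L) ^ (p-1) * ((u-v)*L) ≤ u ^ (p-1) * (L-v) ^ (p-1) * ((u-v)*L) :=
    mul_le_mul_of_nonneg_right hle (mul_nonneg (by linarith) hL.le)
  nlinarith [h4, e1, e2]

-- upper bound via MVT
lemma ubm {p L z v : ℝ} (hp1 : 1 < p) (hp2 : p < 2) (hL : 0 < L)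
    (hz0 : 0 ≤ z) (hzL : z ≤ L) (hv0 : 0 ≤ v) (hvL : v ≤ L) (hvz : v ≤ z) :
    z ^ p * (L-v) ^ p - (z-v) ^ p * L ^ p ≤ p * (z ^ (p-1) * (L-v) ^ (p-1)) * (v*(L-z)) := by
  have hLv : (0:ℝ) ≤ L - v := by linarith
  have h := mvt_bound (p := p) (A := z*(L-v)) (B := (z-v)*L) (mul_nonneg (by linarith) hL.le)
    (by nlinarith) (by linarith)
  rw [Real.mul_rpow hz0 hLv, Real.mul_rpow (by linarith) hL.le, Real.mul_rpow hz0 hLv] at h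
  have : z*(L-v) - (z-v)*L = v*(L-z) := by ring
  rw [this] at h
  linarith

-- core inequality (multiplied through by L^(p+1))
lemma core' {p L u v z : ℝ} (hp1 : 1 < p) (hp2 : p < 2) (hL : 0 < L)
    (hu0 : 0 ≤ u) (huL : u ≤ L) (hv0 : 0 ≤ v) (hvL : v ≤ L) (hz0 : 0 ≤ z) (hzL : z ≤ L) :
    u ^ p * (L-u) * (if v ≤ z then z ^ p * (L-v) ^ p - (z-v) ^ p * L ^ p else z ^ p * (L-v) ^ p)
      ≤ L ^ (p+1) *
        (if v ≤ u then u ^ p * (L-v) ^ p - (u-v) ^ p * L ^ p else u ^ p * (L-v) ^ p) := by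
  have hLv : (0:ℝ) ≤ L - v := by linarith
  have hLu : (0:ℝ) ≤ L - u := by linarith
  have hp0 : (0:ℝ) < p := by linarith
  have hq0 : (0:ℝ) ≤ p - 1 := by linarith
  have hwnn : 0 ≤ u ^ p * (L-u) := mul_nonneg (Real.rpow_nonneg hu0 p) hLu
  have hLp1 : L ^ (p+1) = L ^ p * L := by
    have := rpow_split hL.le (by linarith : (0:ℝ) < p + 1)
    simpa using this
  by_cases hvu : v ≤ u
  · rw [if_pos hvu]
    by_cases hvz : v ≤ z
    · -- case 3
      rw [if_pos hvz]
      calc u ^ p * (L-u) * (z ^ p * (L-v) ^ p - (z-v) ^ p * L ^ p)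
          ≤ u ^ p * (L-u) * (p * (z ^ (p-1) * (L-v) ^ (p-1)) * (v*(L-z))) :=
            mul_le_mul_of_nonneg_left (ubm hp1 hp2 hL hz0 hzL hv0 hvL hvz) hwnn
        _ = (u ^ (p-1) * (L-v) ^ (p-1) * (v*(L-u))) * (u * (p * z ^ (p-1) * (L-z))) := by
            rw [rpow_split hu0 hp0]; ring
        _ ≤ (u ^ (p-1) * (L-v) ^ (p-1) * (v*(L-u))) * (L * L ^ p) := by
            apply mul_le_mul_of_nonneg_left _ (by positivity)
            exact mul_le_mul huL (key2_s13 hz0 hzL hL hp1 hp2)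
              (mul_nonneg (mul_nonneg (by linarith) (Real.rpow_nonneg hz0 _)) (by linarith)) hL.le
        _ = L ^ (p+1) * (u ^ (p-1) * (L-v) ^ (p-1) * (v*(L-u))) := by rw [hLp1]; ring
        _ ≤ L ^ (p+1) * (u ^ p * (L-v) ^ p - (u-v) ^ p * L ^ p) :=
            mul_le_mul_of_nonneg_left (lb3 hp1 hp2 hL hu0 huL hv0 hvL hvu) (by positivity)
    · -- case 2 : z < v
      rw [if_neg hvz]
      push_neg at hvz
      calc u ^ p * (L-u) * (z ^ p * (L-v) ^ p)
          ≤ u ^ p * (L-u) * (v ^ p * (L-v) ^ p) := by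
            apply mul_le_mul_of_nonneg_left _ hwnn
            exact mul_le_mul_of_nonneg_right
              (Real.rpow_le_rpow hz0 hvz.le hp0.le) (Real.rpow_nonneg hLv p)
        _ = (u ^ (p-1) * (L-v) ^ (p-1) * (v*(L-u))) * (u * v ^ (p-1) * (L-v)) := by
            rw [rpow_split hu0 hp0, rpow_split hv0 hp0, rpow_split hLv hp0]; ring
        _ ≤ (u ^ (p-1) * (L-v) ^ (p-1) * (v*(L-u))) * (L * L ^ (p-1) * L) := by
            apply mul_le_mul_of_nonneg_left _ (by positivity)
            apply mul_le_mul _ (by linarith) hLv (by positivity)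
            exact mul_le_mul huL (Real.rpow_le_rpow hv0 hvL hq0) (Real.rpow_nonneg hv0 _) hL.le
        _ = L ^ (p+1) * (u ^ (p-1) * (L-v) ^ (p-1) * (v*(L-u))) := by
            rw [hLp1, rpow_split hL.le hp0]; ring
        _ ≤ L ^ (p+1) * (u ^ p * (L-v) ^ p - (u-v) ^ p * L ^ p) :=
            mul_le_mul_of_nonneg_left (lb3 hp1 hp2 hL hu0 huL hv0 hvL hvu) (by positivity)
  · -- case 1 : u < v
    rw [if_neg hvu]
    have hHz : (if v ≤ z then z ^ p * (L-v) ^ p - (z-v) ^ p * L ^ p else z ^ p * (L-v) ^ p)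
        ≤ L ^ p * (L-v) ^ p := by
      have hz : z ^ p ≤ L ^ p := Real.rpow_le_rpow hz0 hzL hp0.le
      have h1 : z ^ p * (L-v) ^ p ≤ L ^ p * (L-v) ^ p :=
        mul_le_mul_of_nonneg_right hz (Real.rpow_nonneg hLv p)
      split
      · nlinarith [mul_nonneg (Real.rpow_nonneg (by linarith : (0:ℝ) ≤ z - v) p)
          (Real.rpow_nonneg hL.le p)]
      · exact h1
    calc u ^ p * (L-u) * (if v ≤ z then z ^ p * (L-v) ^ p - (z-v) ^ p * L ^ p
            else z ^ p * (L-v) ^ p)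
        ≤ u ^ p * (L-u) * (L ^ p * (L-v) ^ p) := mul_le_mul_of_nonneg_left hHz hwnn
      _ ≤ L ^ (p+1) * (u ^ p * (L-v) ^ p) := by
          rw [hLp1]
          nlinarith [mul_nonneg (mul_nonneg (Real.rpow_nonneg hu0 p)
            (Real.rpow_nonneg hLv p)) (Real.rpow_nonneg hL.le p), hu0]

lemma Hnn {p L u v : ℝ} (hp1 : 1 < p) (hp2 : p < 2) (hL : 0 < L)
    (hu0 : 0 ≤ u) (huL : u ≤ L) (hv0 : 0 ≤ v) (hvL : v ≤ L) :
    0 ≤ (if v ≤ u then u ^ p * (L-v) ^ p - (u-v) ^ p * L ^ p else u ^ p * (L-v) ^ p) := by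
  split
  · have h1 := lb3 hp1 hp2 hL hu0 huL hv0 hvL (by assumption)
    have h2 : 0 ≤ u ^ (p-1) * (L-v) ^ (p-1) * (v*(L-u)) := by
      apply mul_nonneg (mul_nonneg (Real.rpow_nonneg hu0 _) (Real.rpow_nonneg (by linarith) _))
      exact mul_nonneg hv0 (by linarith)
    linarith
  · exact mul_nonneg (Real.rpow_nonneg hu0 _) (Real.rpow_nonneg (by linarith) _)

theorem stmt_13 (a b μ : ℝ) (ha : 0 < a) (hab : a < b) (hμ2 : 2 < μ) (hμ3 : μ < 3)
    (h : ℝ → ℝ) (hc : ContinuousOn h (Set.Icc a b)) (hpos : ∀ τ ∈ Set.Icc a b, 0 ≤ h τ)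
    (Th : ℝ → ℝ) (hTh : Th = fun t => ∫ τ in a..b, G a b μ t τ * h τ / τ)
    (w : ℝ → ℝ)
    (hw : w = fun t => Real.log (t / a) ^ (μ - 1) * Real.log (b / t) / Real.log (b / a) ^ μ) :
    (∀ t ∈ Set.Icc a b, ∀ s ∈ Set.Icc a b, w t * Th s ≤ Th t) ∧
      ∀ t ∈ Set.Icc a b, w t * sSup (Th '' Set.Icc a b) ≤ Th t := by
  have hb : 0 < b := ha.trans hab
  set L : ℝ := Real.log (b / a) with hLdef
  have hL : 0 < L := Real.log_pos ((one_lt_div ha).2 hab)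
  have hp1 : 1 < μ - 1 := by linarith
  have hp2 : μ - 1 < 2 := by linarith
  have hΓ : 0 < Real.Gamma μ := Real.Gamma_pos_of_pos (by linarith)
  have hLq : 0 < L ^ (μ-1) := Real.rpow_pos_of_pos hL _
  set c : ℝ := 1 / (Real.Gamma μ * L ^ (μ-1)) with hcdef
  have hc0 : 0 < c := by positivity
  -- log facts
  have hmem0 : ∀ x ∈ Set.Icc a b, 0 < x := fun x hx => ha.trans_le hx.1
  have hu0 : ∀ x ∈ Set.Icc a b, 0 ≤ Real.log (x / a) := fun x hx =>
    Real.log_nonneg ((one_le_div ha).2 hx.1)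
  have huL : ∀ x ∈ Set.Icc a b, Real.log (x / a) ≤ L := fun x hx =>
    (Real.log_le_log_iff (div_pos (hmem0 x hx) ha) (div_pos hb ha)).2
      ((div_le_div_iff_of_pos_right ha).2 hx.2)
  -- representation of G
  have hGrep : ∀ x ∈ Set.Icc a b, ∀ τ ∈ Set.Icc a b, G a b μ x τ =
      c * (if Real.log (τ/a) ≤ Real.log (x/a) then
        Real.log (x/a) ^ (μ-1) * (L - Real.log (τ/a)) ^ (μ-1)
          - (Real.log (x/a) - Real.log (τ/a)) ^ (μ-1) * L ^ (μ-1)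
        else Real.log (x/a) ^ (μ-1) * (L - Real.log (τ/a)) ^ (μ-1)) := by
    intro x hx τ hτ
    have hx0 := hmem0 x hx
    have hτ0 := hmem0 τ hτ
    have e1 : Real.log (b/τ) = L - Real.log (τ/a) := by
      rw [hLdef, Real.log_div hb.ne' hτ0.ne', Real.log_div hb.ne' ha.ne',
        Real.log_div hτ0.ne' ha.ne']; ring
    have e2 : Real.log (x/τ) = Real.log (x/a) - Real.log (τ/a) := by
      rw [Real.log_div hx0.ne' hτ0.ne', Real.log_div hx0.ne' ha.ne',
        Real.log_div hτ0.ne' ha.ne']; ring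
    have e3 : (τ ≤ x) ↔ (Real.log (τ/a) ≤ Real.log (x/a)) := by
      rw [Real.log_le_log_iff (div_pos hτ0 ha) (div_pos hx0 ha), div_le_div_iff_of_pos_right ha]
    by_cases hτx : τ ≤ x
    · rw [show G a b μ x τ = _ from rfl]
      simp only [G]
      rw [if_pos hτx, if_pos (e3.1 hτx), e1, e2]
    · simp only [G]
      rw [if_neg hτx, if_neg (fun hh => hτx (e3.2 hh)), e1]
  -- representation of w
  have hwrep : ∀ x ∈ Set.Icc a b, w x =
      Real.log (x/a) ^ (μ-1) * (L - Real.log (x/a)) / L ^ ((μ-1)+1) := by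
    intro x hx
    have hx0 := hmem0 x hx
    have e1 : Real.log (b/x) = L - Real.log (x/a) := by
      rw [hLdef, Real.log_div hb.ne' hx0.ne', Real.log_div hb.ne' ha.ne',
        Real.log_div hx0.ne' ha.ne']; ring
    have e4 : (μ - 1) + 1 = μ := by ring
    simp only [hw]
    rw [e1, e4]
  -- pointwise key inequality
  have key : ∀ t ∈ Set.Icc a b, ∀ s ∈ Set.Icc a b, ∀ τ ∈ Set.Icc a b,
      w t * G a b μ s τ ≤ G a b μ t τ := by
    intro t ht s hs τ hτ
    rw [hGrep t ht τ hτ, hGrep s hs τ hτ, hwrep t ht]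
    have hcore := core' (p := μ-1) (L := L) (u := Real.log (t/a)) (v := Real.log (τ/a))
      (z := Real.log (s/a)) hp1 hp2 hL (hu0 t ht) (huL t ht) (hu0 τ hτ) (huL τ hτ)
      (hu0 s hs) (huL s hs)
    have hLP : 0 < L ^ ((μ-1)+1) := Real.rpow_pos_of_pos hL _
    set Hz := (if Real.log (τ/a) ≤ Real.log (s/a) then
        Real.log (s/a) ^ (μ-1) * (L - Real.log (τ/a)) ^ (μ-1)
          - (Real.log (s/a) - Real.log (τ/a)) ^ (μ-1) * L ^ (μ-1)
        else Real.log (s/a) ^ (μ-1) * (L - Real.log (τ/a)) ^ (μ-1)) with hHz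
    set Hu := (if Real.log (τ/a) ≤ Real.log (t/a) then
        Real.log (t/a) ^ (μ-1) * (L - Real.log (τ/a)) ^ (μ-1)
          - (Real.log (t/a) - Real.log (τ/a)) ^ (μ-1) * L ^ (μ-1)
        else Real.log (t/a) ^ (μ-1) * (L - Real.log (τ/a)) ^ (μ-1)) with hHu
    have e5 : Real.log (t/a) ^ (μ-1) * (L - Real.log (t/a)) / L ^ ((μ-1)+1) * (c * Hz)
        = c * (Real.log (t/a) ^ (μ-1) * (L - Real.log (t/a)) * Hz / L ^ ((μ-1)+1)) := by
      ring
    rw [e5]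
    apply mul_le_mul_of_nonneg_left _ hc0.le
    rw [div_le_iff₀ hLP]
    calc Real.log (t/a) ^ (μ-1) * (L - Real.log (t/a)) * Hz
        ≤ L ^ ((μ-1)+1) * Hu := hcore
      _ = Hu * L ^ ((μ-1)+1) := by ring
  -- nonnegativity of G
  have Gnn : ∀ t ∈ Set.Icc a b, ∀ τ ∈ Set.Icc a b, 0 ≤ G a b μ t τ := by
    intro t ht τ hτ
    rw [hGrep t ht τ hτ]
    exact mul_nonneg hc0.le
      (Hnn hp1 hp2 hL (hu0 t ht) (huL t ht) (hu0 τ hτ) (huL τ hτ))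
  -- continuity in τ
  have hrpowc : Continuous fun x : ℝ => x ^ (μ-1) :=
    continuous_iff_continuousAt.2 fun x => Real.continuousAt_rpow_const x _ (Or.inr (by linarith))
  have hGcont : ∀ t ∈ Set.Icc a b, ContinuousOn (fun τ => G a b μ t τ) (Set.Icc a b) := by
    intro t ht
    have ht0 := hmem0 t ht
    have hne : ∀ τ ∈ Set.Icc a b, τ ≠ 0 := fun τ hτ => (hmem0 τ hτ).ne'
    have h1 : ContinuousOn (fun τ : ℝ => Real.log (b/τ)) (Set.Icc a b) :=
      ContinuousOn.log (continuousOn_const.div continuousOn_id hne)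
        (fun τ hτ => (div_pos hb (hmem0 τ hτ)).ne')
    have h2 : ContinuousOn (fun τ : ℝ => Real.log (t/τ)) (Set.Icc a b) :=
      ContinuousOn.log (continuousOn_const.div continuousOn_id hne)
        (fun τ hτ => (div_pos ht0 (hmem0 τ hτ)).ne')
    have hGc : ContinuousOn (fun τ : ℝ =>
        (1 / (Real.Gamma μ * Real.log (b/a) ^ (μ-1))) *
          (Real.log (t/a) ^ (μ-1) * Real.log (b/τ) ^ (μ-1)
            - (max (Real.log (t/τ)) 0) ^ (μ-1) * Real.log (b/a) ^ (μ-1)))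
        (Set.Icc a b) :=
      continuousOn_const.mul
        ((continuousOn_const.mul (hrpowc.comp_continuousOn h1)).sub
          ((hrpowc.comp_continuousOn (h2.sup continuousOn_const)).mul continuousOn_const))
    apply hGc.congr
    intro τ hτ
    have hτ0 := hmem0 τ hτ
    by_cases hτt : τ ≤ t
    · have hmax : max (Real.log (t/τ)) 0 = Real.log (t/τ) :=
        max_eq_left (Real.log_nonneg ((one_le_div hτ0).2 hτt))
      simp only [G, if_pos hτt, hmax]
    · have hmax : max (Real.log (t/τ)) 0 = 0 :=
        max_eq_right (Real.log_nonpos (by positivity) ((div_le_one hτ0).2 (le_of_not_ge hτt)))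
      simp only [G, if_neg hτt, hmax, Real.zero_rpow (by linarith : μ - 1 ≠ 0), zero_mul, sub_zero]
  have hint : ∀ t ∈ Set.Icc a b, IntervalIntegrable (fun τ => G a b μ t τ * h τ / τ)
      MeasureTheory.volume a b := by
    intro t ht
    apply ContinuousOn.intervalIntegrable
    rw [Set.uIcc_of_le hab.le]
    exact ((hGcont t ht).mul hc).div continuousOn_id (fun τ hτ => (hmem0 τ hτ).ne')
  have part1 : ∀ t ∈ Set.Icc a b, ∀ s ∈ Set.Icc a b, w t * Th s ≤ Th t := by
    intro t ht s hs
    simp only [hTh]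
    rw [← intervalIntegral.integral_const_mul]
    apply intervalIntegral.integral_mono_on hab.le ((hint s hs).const_mul (w t)) (hint t ht)
    intro τ hτ
    have h2 : 0 ≤ h τ / τ := div_nonneg (hpos τ hτ) (hmem0 τ hτ).le
    calc w t * (G a b μ s τ * h τ / τ) = (w t * G a b μ s τ) * (h τ / τ) := by ring
      _ ≤ G a b μ t τ * (h τ / τ) := mul_le_mul_of_nonneg_right (key t ht s hs τ hτ) h2
      _ = G a b μ t τ * h τ / τ := by ring
  refine ⟨part1, ?_⟩
  intro t ht
  have hwnn : 0 ≤ w t := by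
    rw [hwrep t ht]
    exact div_nonneg (mul_nonneg (Real.rpow_nonneg (hu0 t ht) _) (by linarith [huL t ht]))
      (Real.rpow_nonneg hL.le _)
  have hThnn : 0 ≤ Th t := by
    simp only [hTh]
    apply intervalIntegral.integral_nonneg hab.le
    intro τ hτ
    exact div_nonneg (mul_nonneg (Gnn t ht τ hτ) (hpos τ hτ)) (hmem0 τ hτ).le
  rcases hwnn.eq_or_lt with hw0 | hwpos
  · rw [← hw0, zero_mul]; exact hThnn
  · have hnem : (Th '' Set.Icc a b).Nonempty := ⟨Th a, a, Set.left_mem_Icc.2 hab.le, rfl⟩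
    have hub : ∀ y ∈ Th '' Set.Icc a b, y ≤ Th t / w t := by
      rintro y ⟨s, hs, rfl⟩
      rw [le_div_iff₀ hwpos]
      calc Th s * w t = w t * Th s := by ring
        _ ≤ Th t := part1 t ht s hs
    calc w t * sSup (Th '' Set.Icc a b) ≤ w t * (Th t / w t) :=
        mul_le_mul_of_nonneg_left (csSup_le hnem hub) hwpos.le
      _ = Th t := by field_simp
end

section
/- For 0 < a < b and 2 < μ < 3, the function x(t) = c₁·(ln(t/a))^(μ-1) − (1/Γ(μ))·∫_a^t (ln(t/τ))^(μ-1)·y(τ)·(dτ/τ), with c₁ = (1/(Γ(μ)·(ln(b/a))^(μ-1)))·∫_a^b (ln(b/τ))^(μ-1)·y(τ)·(dτ/τ), can be rewritten for every t ∈ [a,b] as x(t) = ∫_a^b G(t,τ)·y(τ)·(dτ/τ), where G is the piecewise-defined Green's function of the Hadamard fractional BVP. -/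
open MeasureTheory intervalIntegral

theorem stmt_15 (a b μ : ℝ) (ha : 0 < a) (hab : a < b) (hμ2 : 2 < μ) (hμ3 : μ < 3)
    (y : ℝ → ℝ) (hy : IntervalIntegrable (fun τ => y τ / τ) MeasureTheory.volume a b)
    (c₁ : ℝ)
    (hc₁ : c₁ = (1 / (Real.Gamma μ * Real.log (b / a) ^ (μ - 1))) *
      ∫ τ in a..b, Real.log (b / τ) ^ (μ - 1) * y τ / τ)
    (x : ℝ → ℝ)
    (hx : x = fun t => c₁ * Real.log (t / a) ^ (μ - 1) -
      (1 / Real.Gamma μ) * ∫ τ in a..t, Real.log (t / τ) ^ (μ - 1) * y τ / τ) :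
    ∀ t ∈ Set.Icc a b, x t = ∫ τ in a..b, G a b μ t τ * y τ / τ := by
  intro t ht
  obtain ⟨hat, htb⟩ := ht
  have hb : (0:ℝ) < b := ha.trans hab
  have hΓ : (0:ℝ) < Real.Gamma μ := Real.Gamma_pos_of_pos (by linarith)
  have hL : (0:ℝ) < Real.log (b / a) := Real.log_pos ((one_lt_div ha).mpr hab)
  have hμ1 : (0:ℝ) < μ - 1 := by linarith
  set K : ℝ := 1 / (Real.Gamma μ * Real.log (b / a) ^ (μ - 1)) with hK
  set L : ℝ := Real.log (b / a) ^ (μ - 1) with hLd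
  have hL' : (0:ℝ) < L := Real.rpow_pos_of_pos hL _
  set A : ℝ := Real.log (t / a) ^ (μ - 1) with hA
  -- continuity helpers
  have hcontB : ContinuousOn (fun τ => Real.log (b / τ) ^ (μ - 1)) (Set.Icc a b) := by
    apply ContinuousOn.rpow_const
    · apply ContinuousOn.log
      · exact continuousOn_const.div continuousOn_id fun τ hτ => ne_of_gt (lt_of_lt_of_le ha hτ.1)
      · intro τ hτ
        exact ne_of_gt (div_pos hb (lt_of_lt_of_le ha hτ.1))
    · exact fun τ _ => Or.inr hμ1.le
  have hcontC : ContinuousOn (fun τ => Real.log (t / τ) ^ (μ - 1)) (Set.Icc a b) := by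
    apply ContinuousOn.rpow_const
    · apply ContinuousOn.log
      · exact continuousOn_const.div continuousOn_id fun τ hτ => ne_of_gt (lt_of_lt_of_le ha hτ.1)
      · intro τ hτ
        exact ne_of_gt (div_pos (lt_of_lt_of_le ha hat) (lt_of_lt_of_le ha hτ.1))
    · exact fun τ _ => Or.inr hμ1.le
  have huab : Set.uIcc a b = Set.Icc a b := Set.uIcc_of_le hab.le
  have huat : Set.uIcc a t = Set.Icc a t := Set.uIcc_of_le hat
  have hutb : Set.uIcc t b = Set.Icc t b := Set.uIcc_of_le htb
  have hsub1 : Set.uIcc a t ⊆ Set.uIcc a b := by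
    rw [huat, huab]; exact Set.Icc_subset_Icc le_rfl htb
  have hsub2 : Set.uIcc t b ⊆ Set.uIcc a b := by
    rw [hutb, huab]; exact Set.Icc_subset_Icc hat le_rfl
  have hyat : IntervalIntegrable (fun τ => y τ / τ) volume a t := hy.mono_set hsub1
  have hytb : IntervalIntegrable (fun τ => y τ / τ) volume t b := hy.mono_set hsub2
  have hBab : IntervalIntegrable (fun τ => Real.log (b / τ) ^ (μ - 1) * (y τ / τ)) volume a b :=
    hy.continuousOn_mul (huab ▸ hcontB)
  have hBat : IntervalIntegrable (fun τ => Real.log (b / τ) ^ (μ - 1) * (y τ / τ)) volume a t :=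
    hyat.continuousOn_mul (hcontB.mono (huab ▸ hsub1))
  have hBtb : IntervalIntegrable (fun τ => Real.log (b / τ) ^ (μ - 1) * (y τ / τ)) volume t b :=
    hytb.continuousOn_mul (hcontB.mono (huab ▸ hsub2))
  have hCat : IntervalIntegrable (fun τ => Real.log (t / τ) ^ (μ - 1) * (y τ / τ)) volume a t :=
    hyat.continuousOn_mul (hcontC.mono (huab ▸ hsub1))
  -- pointwise descriptions of the integrand
  have eq1 : Set.EqOn (fun τ => G a b μ t τ * y τ / τ)
      (fun τ => K * A * (Real.log (b / τ) ^ (μ - 1) * (y τ / τ)) -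
        K * L * (Real.log (t / τ) ^ (μ - 1) * (y τ / τ))) (Set.uIcc a t) := by
    intro τ hτ
    rw [huat] at hτ
    simp only [G, if_pos hτ.2, hK, hA, hLd]
    ring
  have eq2 : Set.EqOn (fun τ => G a b μ t τ * y τ / τ)
      (fun τ => K * A * (Real.log (b / τ) ^ (μ - 1) * (y τ / τ))) (Set.uIcc t b) := by
    intro τ hτ
    rw [hutb] at hτ
    by_cases h : τ ≤ t
    · have hτt : τ = t := le_antisymm h hτ.1
      subst hτt
      simp only [G, if_pos le_rfl, div_self (ne_of_gt (lt_of_lt_of_le ha hat)), Real.log_one,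
        Real.zero_rpow (ne_of_gt hμ1), zero_mul, sub_zero, hK, hA, hLd]
      ring
    · simp only [G, if_neg h, hK, hA, hLd]
      ring
  -- integrability of the G-integrand on each adjacent interval
  have hG1 : IntervalIntegrable (fun τ => G a b μ t τ * y τ / τ) volume a t := by
    apply IntervalIntegrable.congr_ae _ (Filter.eventuallyEq_of_mem
      (self_mem_ae_restrict measurableSet_uIoc)
      fun τ hτ => (eq1 (Set.uIoc_subset_uIcc hτ)).symm)
    exact ((hBat.const_mul (K * A)).sub (hCat.const_mul (K * L)))
  have hG2 : IntervalIntegrable (fun τ => G a b μ t τ * y τ / τ) volume t b := by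
    apply IntervalIntegrable.congr_ae _ (Filter.eventuallyEq_of_mem
      (self_mem_ae_restrict measurableSet_uIoc)
      fun τ hτ => (eq2 (Set.uIoc_subset_uIcc hτ)).symm)
    exact hBtb.const_mul (K * A)
  have hsplit : (∫ τ in a..t, G a b μ t τ * y τ / τ) + (∫ τ in t..b, G a b μ t τ * y τ / τ)
      = ∫ τ in a..b, G a b μ t τ * y τ / τ :=
    integral_add_adjacent_intervals hG1 hG2
  have h1 : (∫ τ in a..t, G a b μ t τ * y τ / τ)
      = K * A * (∫ τ in a..t, Real.log (b / τ) ^ (μ - 1) * (y τ / τ)) -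
        K * L * (∫ τ in a..t, Real.log (t / τ) ^ (μ - 1) * (y τ / τ)) := by
    rw [integral_congr eq1, integral_sub ((hBat.const_mul (K * A))) ((hCat.const_mul (K * L))),
      intervalIntegral.integral_const_mul, intervalIntegral.integral_const_mul]
  have h2 : (∫ τ in t..b, G a b μ t τ * y τ / τ)
      = K * A * (∫ τ in t..b, Real.log (b / τ) ^ (μ - 1) * (y τ / τ)) := by
    rw [integral_congr eq2, intervalIntegral.integral_const_mul]
  have hBsplit : (∫ τ in a..t, Real.log (b / τ) ^ (μ - 1) * (y τ / τ)) +
      (∫ τ in t..b, Real.log (b / τ) ^ (μ - 1) * (y τ / τ))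
      = ∫ τ in a..b, Real.log (b / τ) ^ (μ - 1) * (y τ / τ) :=
    integral_add_adjacent_intervals hBat hBtb
  have hKL : K * L = 1 / Real.Gamma μ := by
    rw [hK, hLd]
    field_simp
  have hmda : ∀ (c d : ℝ), (∫ τ in c..d, Real.log (b / τ) ^ (μ - 1) * y τ / τ)
      = ∫ τ in c..d, Real.log (b / τ) ^ (μ - 1) * (y τ / τ) := by
    intro c d; congr 1; ext τ; rw [mul_div_assoc]
  have hmda2 : (∫ τ in a..t, Real.log (t / τ) ^ (μ - 1) * y τ / τ)
      = ∫ τ in a..t, Real.log (t / τ) ^ (μ - 1) * (y τ / τ) := by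
    congr 1; ext τ; rw [mul_div_assoc]
  rw [hx]
  simp only
  rw [← hsplit, h1, h2, hc₁, hmda a b, hmda2, ← hBsplit, ← hA, ← hKL]
  ring
end

section
/- Let 0 < a < b and 2 < μ < 3. For fixed t ∈ (a, b), the function τ ↦ (ln(t/a))^(μ-1)·(ln(b/τ))^(μ-1) − (ln(t/τ))^(μ-1)·(ln(b/a))^(μ-1), defined for τ ∈ [a, t], is nonnegative. -/
theorem stmt_18 (a b μ : ℝ) (ha : 0 < a) (hab : a < b) (hμ2 : 2 < μ) (hμ3 : μ < 3)
    (t : ℝ) (ht : t ∈ Set.Ioo a b) :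
    ∀ τ ∈ Set.Icc a t,
      0 ≤ Real.log (t / a) ^ (μ - 1) * Real.log (b / τ) ^ (μ - 1) -
        Real.log (t / τ) ^ (μ - 1) * Real.log (b / a) ^ (μ - 1) := by
  intro τ hτ
  obtain ⟨hat, htb⟩ := ht
  obtain ⟨haτ, hτt⟩ := hτ
  have hτ0 : 0 < τ := lt_of_lt_of_le ha haτ
  have ht0 : 0 < t := lt_trans ha hat
  have hb0 : 0 < b := lt_trans ht0 htb
  have hla : Real.log a ≤ Real.log τ := Real.log_le_log ha haτ
  have hlτ : Real.log τ ≤ Real.log t := Real.log_le_log hτ0 hτt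
  have hlt : Real.log t ≤ Real.log b := Real.log_le_log ht0 (le_of_lt htb)
  have e1 : Real.log (t / a) = Real.log t - Real.log a := Real.log_div ht0.ne' ha.ne'
  have e2 : Real.log (b / τ) = Real.log b - Real.log τ := Real.log_div hb0.ne' hτ0.ne'
  have e3 : Real.log (t / τ) = Real.log t - Real.log τ := Real.log_div ht0.ne' hτ0.ne'
  have e4 : Real.log (b / a) = Real.log b - Real.log a := Real.log_div hb0.ne' ha.ne'
  have n1 : 0 ≤ Real.log (t / a) := by rw [e1]; linarith
  have n2 : 0 ≤ Real.log (b / τ) := by rw [e2]; linarith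
  have n3 : 0 ≤ Real.log (t / τ) := by rw [e3]; linarith
  have n4 : 0 ≤ Real.log (b / a) := by rw [e4]; linarith
  have key : Real.log (t / τ) * Real.log (b / a) ≤ Real.log (t / a) * Real.log (b / τ) := by
    rw [e1, e2, e3, e4]
    nlinarith [mul_nonneg (sub_nonneg.2 hla) (sub_nonneg.2 hlt)]
  have h1 : Real.log (t / τ) ^ (μ - 1) * Real.log (b / a) ^ (μ - 1)
      = (Real.log (t / τ) * Real.log (b / a)) ^ (μ - 1) := (Real.mul_rpow n3 n4).symm
  have h2 : Real.log (t / a) ^ (μ - 1) * Real.log (b / τ) ^ (μ - 1)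
      = (Real.log (t / a) * Real.log (b / τ)) ^ (μ - 1) := (Real.mul_rpow n1 n2).symm
  rw [sub_nonneg, h1, h2]
  exact Real.rpow_le_rpow (mul_nonneg n3 n4) key (by linarith)
end
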